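/- Let H be a weak Hopf algebra with bijective antipode, B an H-bicomodule algebra with a morphism of H-bicomodule algebras v : H → B, and A = B^{co(H)} = {b ∈ B : ρ_B(b) = b₍₀₎ ⊗ ε_t(b₍₁₎)} the coinvariants with H-action h▷a = E(v(h)a) where E(b) = b₍₀₎ v(S(b₍₁₎)). Then A is a left H-comodule algebra (with coaction and multiplication restricted from B) and the map φ : A # H → B, φ(a # h) = a v(h), is an isomorphism of H-bicomodule algebras. -/

import Mathlib

open TensorProduct LinearMap

/-- A weak Hopf algebra over a commutative ring `k`: a `k`-algebra `H` equipped with a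
coassociative counital comultiplication which is multiplicative, satisfying the weak
comultiplication axiom `Δ²(1) = (Δ(1)⊗1)(1⊗Δ(1)) = (1⊗Δ(1))(Δ(1)⊗1)`, the weak counit axiom
`ε(xyz) = ε(xy₁)ε(y₂z) = ε(xy₂)ε(y₁z)`, and an antipode satisfying
`h₁S(h₂) = ε(1₁h)1₂`, `S(h₁)h₂ = 1₁ε(h1₂)` and `S(h₁)h₂S(h₃) = S(h)`. -/
structure WeakHopfAlgebra (k H : Type*) [CommRing k] [Ring H] [Algebra k H] where
  comul : H →ₗ[k] H ⊗[k] H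
  counit : H →ₗ[k] k
  antipode : H →ₗ[k] H
  comul_coassoc : (TensorProduct.assoc k H H H).toLinearMap ∘ₗ
      (LinearMap.rTensor H comul) ∘ₗ comul = (LinearMap.lTensor H comul) ∘ₗ comul
  counit_comul : (TensorProduct.lid k H).toLinearMap ∘ₗ
      (LinearMap.rTensor H counit) ∘ₗ comul = LinearMap.id
  comul_counit : (TensorProduct.rid k H).toLinearMap ∘ₗ
      (LinearMap.lTensor H counit) ∘ₗ comul = LinearMap.id
  comul_mul : ∀ x y : H, comul (x * y) = comul x * comul y
  comul_one_left : (LinearMap.rTensor H comul) (comul 1)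
      = (comul 1 ⊗ₜ[k] (1 : H)) * ((TensorProduct.assoc k H H H).symm ((1 : H) ⊗ₜ[k] comul 1))
  comul_one_right : (LinearMap.rTensor H comul) (comul 1)
      = ((TensorProduct.assoc k H H H).symm ((1 : H) ⊗ₜ[k] comul 1)) * (comul 1 ⊗ₜ[k] (1 : H))
  counit_mul_left : ∀ x y z : H, counit (x * y * z)
      = LinearMap.mul' k k ((TensorProduct.map (counit ∘ₗ LinearMap.mulLeft k x)
          (counit ∘ₗ LinearMap.mulRight k z)) (comul y))
  counit_mul_right : ∀ x y z : H, counit (x * y * z)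
      = LinearMap.mul' k k ((TensorProduct.map (counit ∘ₗ LinearMap.mulRight k z)
          (counit ∘ₗ LinearMap.mulLeft k x)) (comul y))
  antipode_right : ∀ h : H,
      LinearMap.mul' k H ((LinearMap.lTensor H antipode) (comul h))
        = (TensorProduct.lid k H) ((LinearMap.rTensor H
            (counit ∘ₗ LinearMap.mulRight k h)) (comul 1))
  antipode_left : ∀ h : H,
      LinearMap.mul' k H ((LinearMap.rTensor H antipode) (comul h))
        = (TensorProduct.rid k H) ((LinearMap.lTensor H
            (counit ∘ₗ LinearMap.mulLeft k h)) (comul 1))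
  antipode_mid : ∀ h : H,
      LinearMap.mul' k H ((TensorProduct.map
          (LinearMap.mul' k H ∘ₗ LinearMap.rTensor H antipode) antipode)
            ((LinearMap.rTensor H comul) (comul h))) = antipode h

namespace WeakHopfAlgebra

variable {k H : Type*} [CommRing k] [Ring H] [Algebra k H]

/-- The target map `ε_t(h) = ε(1₁h)1₂`. -/
noncomputable def εt (W : WeakHopfAlgebra k H) : H →ₗ[k] H :=
  (TensorProduct.lid k H).toLinearMap ∘ₗ (LinearMap.rTensor H W.counit) ∘ₗ
    (LinearMap.mulLeft k (W.comul 1)) ∘ₗ ((TensorProduct.mk k H H).flip 1)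

/-- The source map `ε_s(h) = 1₁ε(h1₂)`. -/
noncomputable def εs (W : WeakHopfAlgebra k H) : H →ₗ[k] H :=
  (TensorProduct.rid k H).toLinearMap ∘ₗ (LinearMap.lTensor H W.counit) ∘ₗ
    (LinearMap.mulRight k (W.comul 1)) ∘ₗ ((TensorProduct.mk k H H) 1)

end WeakHopfAlgebra

namespace WeakHopfAlgebra

variable {k H : Type*} [CommRing k] [Ring H] [Algebra k H]

/-- The subspace of relations defining the relative tensor product `A ⊗_{H_t} H`
underlying the smash product `A # H`: it is spanned by the elements
`(a·z) ⊗ h - a ⊗ (zh)` for `z ∈ H_t`, where `a·z := a (z·1_A)`. -/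
noncomputable def smashRel (W : WeakHopfAlgebra k H) {A : Type*} [AddCommGroup A] [Module k A]
    (mulA : A →ₗ[k] A →ₗ[k] A) (oneA : A) (act : H →ₗ[k] A →ₗ[k] A) :
    Submodule k (A ⊗[k] H) :=
  Submodule.span k {x | ∃ (a : A) (h z : H), z ∈ Set.range W.εt ∧
    x = (mulA a (act z oneA)) ⊗ₜ[k] h - a ⊗ₜ[k] (z * h)}

end WeakHopfAlgebra

namespace WeakHopfAlgebra

variable {k H : Type*} [CommRing k] [Ring H] [Algebra k H]

/-- The coinvariants `B^{co(H)} = {b ∈ B : ρ_B(b) = b₍₀₎ ⊗ ε_t(b₍₁₎)}` of a right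
`H`-comodule algebra `B`. -/
def coinvariants (W : WeakHopfAlgebra k H) {B : Type*} [Ring B] [Algebra k B]
    (rhoB : B →ₗ[k] B ⊗[k] H) : Submodule k B where
  carrier := {b | rhoB b = (LinearMap.lTensor B W.εt) (rhoB b)}
  add_mem' := by
    intro a b ha hb
    simp only [Set.mem_setOf_eq] at *
    rw [map_add, map_add, ← ha, ← hb]
  zero_mem' := by simp
  smul_mem' := by
    intro c x hx
    simp only [Set.mem_setOf_eq] at *
    rw [map_smul, map_smul, ← hx]

/-- The projection `E(b) = b₍₀₎ v(S(b₍₁₎))` onto the coinvariants. -/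
noncomputable def Emap (W : WeakHopfAlgebra k H) {B : Type*} [Ring B] [Algebra k B]
    (rhoB : B →ₗ[k] B ⊗[k] H) (v : H →ₐ[k] B) : B →ₗ[k] B :=
  LinearMap.mul' k B ∘ₗ (LinearMap.lTensor B (v.toLinearMap ∘ₗ W.antipode)) ∘ₗ rhoB

end WeakHopfAlgebra

namespace WHAux

open WeakHopfAlgebra

variable {k H : Type*} [CommRing k] [Ring H] [Algebra k H]

/-- extensionality for maps out of `M ⊗ (N ⊗ P)` -/
theorem ext3r {M N P Q : Type*} [AddCommMonoid M] [AddCommMonoid N] [AddCommMonoid P]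
    [AddCommMonoid Q] [Module k M] [Module k N] [Module k P] [Module k Q]
    {f g : M ⊗[k] (N ⊗[k] P) →ₗ[k] Q}
    (h : ∀ x y z, f (x ⊗ₜ (y ⊗ₜ z)) = g (x ⊗ₜ (y ⊗ₜ z))) : f = g := by
  have h2 : f ∘ₗ (TensorProduct.assoc k M N P).toLinearMap
      = g ∘ₗ (TensorProduct.assoc k M N P).toLinearMap :=
    TensorProduct.ext_threefold fun x y z => by simpa using h x y z
  refine LinearMap.ext fun t => ?_
  have h3 := congrArg (fun (F : (M ⊗[k] N) ⊗[k] P →ₗ[k] Q) =>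
    F ((TensorProduct.assoc k M N P).symm t)) h2
  simpa using h3

variable (W : WeakHopfAlgebra k H)

theorem co2 (h : H) : (rTensor H W.comul) (W.comul h)
    = (TensorProduct.assoc k H H H).symm ((lTensor H W.comul) (W.comul h)) := by
  have h1 := DFunLike.congr_fun W.comul_coassoc h
  simp only [coe_comp, Function.comp_apply, LinearEquiv.coe_coe] at h1
  rw [← h1]
  simp

theorem sum_eps_first {h : H} {ι : Type*} {s : Finset ι} {x y : ι → H}
    (hrep : W.comul h = ∑ i ∈ s, x i ⊗ₜ[k] y i) :
    ∑ i ∈ s, W.counit (x i) • y i = h := by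
  have h1 := DFunLike.congr_fun W.counit_comul h
  simp only [coe_comp, Function.comp_apply, LinearEquiv.coe_coe, id_coe, id_eq] at h1
  rw [hrep] at h1
  simpa [map_sum] using h1

theorem sum_eps_second {h : H} {ι : Type*} {s : Finset ι} {x y : ι → H}
    (hrep : W.comul h = ∑ i ∈ s, x i ⊗ₜ[k] y i) :
    ∑ i ∈ s, W.counit (y i) • x i = h := by
  have h1 := DFunLike.congr_fun W.comul_counit h
  simp only [coe_comp, Function.comp_apply, LinearEquiv.coe_coe, id_coe, id_eq] at h1
  rw [hrep] at h1
  simpa [map_sum] using h1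

theorem eps_t_apply (h : H) {ι : Type*} {s : Finset ι} {e f : ι → H}
    (hrep : W.comul 1 = ∑ i ∈ s, e i ⊗ₜ[k] f i) :
    W.εt h = ∑ i ∈ s, W.counit (e i * h) • f i := by
  simp [WeakHopfAlgebra.εt, hrep, Finset.sum_mul, Algebra.TensorProduct.tmul_mul_tmul,
    map_sum]

theorem eps_s_apply (h : H) {ι : Type*} {s : Finset ι} {e f : ι → H}
    (hrep : W.comul 1 = ∑ i ∈ s, e i ⊗ₜ[k] f i) :
    W.εs h = ∑ i ∈ s, W.counit (h * f i) • e i := by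
  simp [WeakHopfAlgebra.εs, hrep, Finset.mul_sum, Algebra.TensorProduct.tmul_mul_tmul,
    map_sum]

theorem sum_mul_antipode {h : H} {ι : Type*} {s : Finset ι} {x y : ι → H}
    (hrep : W.comul h = ∑ i ∈ s, x i ⊗ₜ[k] y i) :
    ∑ i ∈ s, x i * W.antipode (y i) = W.εt h := by
  have h1 := W.antipode_right h
  obtain ⟨s1, hs1⟩ := TensorProduct.exists_finset (W.comul 1)
  rw [hrep, hs1] at h1
  rw [eps_t_apply W h hs1]
  simpa [map_sum, mul'_apply, TensorProduct.lid_tmul] using h1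

theorem sum_antipode_mul {h : H} {ι : Type*} {s : Finset ι} {x y : ι → H}
    (hrep : W.comul h = ∑ i ∈ s, x i ⊗ₜ[k] y i) :
    ∑ i ∈ s, W.antipode (x i) * y i = W.εs h := by
  have h1 := W.antipode_left h
  obtain ⟨s1, hs1⟩ := TensorProduct.exists_finset (W.comul 1)
  rw [hrep, hs1] at h1
  rw [eps_s_apply W h hs1]
  simpa [map_sum, mul'_apply, TensorProduct.rid_tmul] using h1

theorem mulS_eq (h : H) : LinearMap.mul' k H ((lTensor H W.antipode) (W.comul h)) = W.εt h := by
  obtain ⟨s, hs⟩ := TensorProduct.exists_finset (W.comul h)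
  rw [hs]
  simpa [map_sum] using sum_mul_antipode W hs

theorem Smul_eq (h : H) : LinearMap.mul' k H ((rTensor H W.antipode) (W.comul h)) = W.εs h := by
  obtain ⟨s, hs⟩ := TensorProduct.exists_finset (W.comul h)
  rw [hs]
  simpa [map_sum] using sum_antipode_mul W hs

theorem counit_mul_eps_t (z x : H) : W.counit (z * W.εt x) = W.counit (z * x) := by
  obtain ⟨s1, hs1⟩ := TensorProduct.exists_finset (W.comul 1)
  have h2 := W.counit_mul_right z 1 x
  rw [hs1] at h2
  rw [mul_one] at h2
  rw [eps_t_apply W x hs1]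
  simp only [Finset.mul_sum, mul_smul_comm, map_sum, map_smul]
  rw [h2]
  simp only [map_sum, mul'_apply, TensorProduct.map_tmul, coe_comp, Function.comp_apply,
    mulLeft_apply, mulRight_apply]
  exact Finset.sum_congr rfl fun i _ => by simp [smul_eq_mul]

theorem counit_eps_s_mul (x z : H) : W.counit (W.εs x * z) = W.counit (x * z) := by
  obtain ⟨s1, hs1⟩ := TensorProduct.exists_finset (W.comul 1)
  have h2 := W.counit_mul_right x 1 z
  rw [hs1] at h2
  rw [mul_one] at h2
  rw [eps_s_apply W x hs1]
  simp only [Finset.sum_mul, smul_mul_assoc, map_sum, map_smul]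
  rw [h2]
  simp only [map_sum, mul'_apply, TensorProduct.map_tmul, coe_comp, Function.comp_apply,
    mulLeft_apply, mulRight_apply]
  exact Finset.sum_congr rfl fun i _ => by simp [smul_eq_mul, mul_comm]

theorem counit_eps_t (x : H) : W.counit (W.εt x) = W.counit x := by
  have h1 := counit_mul_eps_t W 1 x
  simpa using h1

theorem eps_s_mul (x y : H) : W.εs (x * y) = W.εs (W.εs x * y) := by
  obtain ⟨s1, hs1⟩ := TensorProduct.exists_finset (W.comul 1)
  rw [eps_s_apply W (x * y) hs1, eps_s_apply W (W.εs x * y) hs1]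
  refine Finset.sum_congr rfl fun i _ => ?_
  rw [mul_assoc, mul_assoc, counit_eps_s_mul]

theorem eps_t_one : W.εt 1 = 1 := by
  obtain ⟨s1, hs1⟩ := TensorProduct.exists_finset (W.comul 1)
  rw [eps_t_apply W 1 hs1]
  simpa using sum_eps_first W hs1

theorem eps_s_one : W.εs 1 = 1 := by
  obtain ⟨s1, hs1⟩ := TensorProduct.exists_finset (W.comul 1)
  rw [eps_s_apply W 1 hs1]
  simpa using sum_eps_second W hs1

/-- `(εs ⊗ id) Δ1 = Δ1`. -/
theorem J1 : (rTensor H W.εs) (W.comul 1) = W.comul 1 := by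
  obtain ⟨s, hs⟩ := TensorProduct.exists_finset (W.comul 1)
  have hX := W.comul_one_right
  set Φ : (H ⊗[k] H) ⊗[k] H →ₗ[k] H ⊗[k] H :=
    rTensor H ((TensorProduct.rid k H).toLinearMap ∘ₗ lTensor H W.counit) with hΦ
  have hL : Φ ((rTensor H W.comul) (W.comul 1)) = W.comul 1 := by
    conv_lhs => rw [hs]
    simp only [map_sum, rTensor_tmul, hΦ, coe_comp, Function.comp_apply, LinearEquiv.coe_coe]
    calc ∑ i ∈ s, (TensorProduct.rid k H) ((lTensor H W.counit) (W.comul i.1)) ⊗ₜ[k] i.2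
        = ∑ i ∈ s, i.1 ⊗ₜ[k] i.2 := by
          refine Finset.sum_congr rfl fun i _ => ?_
          have h1 := DFunLike.congr_fun W.comul_counit i.1
          simp only [coe_comp, Function.comp_apply, LinearEquiv.coe_coe, id_coe, id_eq] at h1
          rw [h1]
      _ = W.comul 1 := hs.symm
  have expand : ((TensorProduct.assoc k H H H).symm ((1 : H) ⊗ₜ[k] W.comul 1)) * (W.comul 1 ⊗ₜ[k] (1 : H))
      = ∑ i ∈ s, ∑ j ∈ s, (j.1 ⊗ₜ[k] (i.1 * j.2)) ⊗ₜ[k] i.2 := by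
    rw [hs]
    simp only [TensorProduct.tmul_sum, TensorProduct.sum_tmul, map_sum, Finset.sum_mul,
      Finset.mul_sum, TensorProduct.assoc_symm_tmul, Algebra.TensorProduct.tmul_mul_tmul,
      one_mul, mul_one]
    rw [Finset.sum_comm]
  have hR : Φ (((TensorProduct.assoc k H H H).symm ((1 : H) ⊗ₜ[k] W.comul 1)) * (W.comul 1 ⊗ₜ[k] (1 : H)))
      = (rTensor H W.εs) (W.comul 1) := by
    rw [expand]
    conv_rhs => rw [hs]
    simp only [map_sum, rTensor_tmul]
    refine Finset.sum_congr rfl fun i _ => ?_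
    rw [eps_s_apply W i.1 hs]
    simp only [hΦ, map_sum, rTensor_tmul, coe_comp, Function.comp_apply, LinearEquiv.coe_coe,
      lTensor_tmul, TensorProduct.rid_tmul, TensorProduct.smul_tmul', TensorProduct.sum_tmul]
  rw [← hR, ← hX, hL]

theorem S_one : W.antipode 1 = 1 := by
  obtain ⟨s, hs⟩ := TensorProduct.exists_finset (W.comul 1)
  have hm := W.antipode_mid 1
  have hL : LinearMap.mul' k H ((TensorProduct.map
      (LinearMap.mul' k H ∘ₗ LinearMap.rTensor H W.antipode) W.antipode)
      ((LinearMap.rTensor H W.comul) (W.comul 1)))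
      = ∑ i ∈ s, W.εs i.1 * W.antipode i.2 := by
    conv_lhs => rw [hs]
    simp only [map_sum, rTensor_tmul, TensorProduct.map_tmul, coe_comp, Function.comp_apply,
      mul'_apply]
    exact Finset.sum_congr rfl fun i _ => by rw [Smul_eq]
  have hJ := J1 W
  have hJ2 := congrArg (LinearMap.mul' k H ∘ lTensor H W.antipode) hJ
  rw [hs] at hJ2
  simp only [Function.comp_apply, map_sum, rTensor_tmul, lTensor_tmul, mul'_apply] at hJ2
  rw [hm.symm, hL, hJ2]
  have := sum_mul_antipode W hs
  rw [this, eps_t_one]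

section Conv

variable {M : Type*} [Ring M] [Algebra k M]

/-- convolution product on `H →ₗ[k] M` -/
noncomputable def cmul (f g : H →ₗ[k] M) : H →ₗ[k] M :=
  LinearMap.mul' k M ∘ₗ TensorProduct.map f g ∘ₗ W.comul

/-- convolution unit -/
noncomputable def cone : H →ₗ[k] M := Algebra.linearMap k M ∘ₗ W.counit

theorem cone_apply (h : H) : (cone W : H →ₗ[k] M) h = W.counit h • 1 := by
  simp [cone, Algebra.algebraMap_eq_smul_one]

theorem cmul_apply (f g : H →ₗ[k] M) (h : H) :
    cmul W f g h = LinearMap.mul' k M (TensorProduct.map f g (W.comul h)) := rfl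

theorem cmul_apply_rep (f g : H →ₗ[k] M) {h : H} {ι : Type*} {s : Finset ι} {x y : ι → H}
    (hrep : W.comul h = ∑ i ∈ s, x i ⊗ₜ[k] y i) :
    cmul W f g h = ∑ i ∈ s, f (x i) * g (y i) := by
  rw [cmul_apply, hrep]
  simp [map_sum]

theorem cmul_assoc (f g p : H →ₗ[k] M) :
    cmul W (cmul W f g) p = cmul W f (cmul W g p) := by
  have key : (LinearMap.mul' k M ∘ₗ TensorProduct.map (LinearMap.mul' k M ∘ₗ TensorProduct.map f g) p)
        ∘ₗ (TensorProduct.assoc k H H H).symm.toLinearMap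
      = LinearMap.mul' k M ∘ₗ TensorProduct.map f (LinearMap.mul' k M ∘ₗ TensorProduct.map g p) :=
    ext3r fun x y z => by simp [mul_assoc]
  refine LinearMap.ext fun h => ?_
  have e1 : TensorProduct.map (cmul W f g) p
      = (TensorProduct.map (LinearMap.mul' k M ∘ₗ TensorProduct.map f g) p) ∘ₗ rTensor H W.comul :=
    TensorProduct.ext' fun x y => by simp [cmul_apply]
  have e2 : TensorProduct.map f (cmul W g p)
      = (TensorProduct.map f (LinearMap.mul' k M ∘ₗ TensorProduct.map g p)) ∘ₗ lTensor H W.comul :=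
    TensorProduct.ext' fun x y => by simp [cmul_apply]
  rw [cmul_apply, cmul_apply, e1, e2]
  simp only [coe_comp, Function.comp_apply]
  rw [co2]
  have := DFunLike.congr_fun key ((lTensor H W.comul) (W.comul h))
  simpa using this

theorem cmul_cone_right (f : H →ₗ[k] M) : cmul W f (cone W) = f := by
  refine LinearMap.ext fun h => ?_
  obtain ⟨s, hs⟩ := TensorProduct.exists_finset (W.comul h)
  rw [cmul_apply_rep W _ _ hs]
  calc ∑ i ∈ s, f i.1 * (cone W) i.2 = ∑ i ∈ s, W.counit i.2 • f i.1 := by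
        refine Finset.sum_congr rfl fun i _ => ?_
        rw [cone_apply, mul_smul_comm, mul_one]
    _ = f (∑ i ∈ s, W.counit i.2 • i.1) := by rw [map_sum]; simp only [map_smul]
    _ = f h := by rw [sum_eps_second W hs]

theorem cmul_cone_left (f : H →ₗ[k] M) : cmul W (cone W) f = f := by
  refine LinearMap.ext fun h => ?_
  obtain ⟨s, hs⟩ := TensorProduct.exists_finset (W.comul h)
  rw [cmul_apply_rep W _ _ hs]
  calc ∑ i ∈ s, (cone W) i.1 * f i.2 = ∑ i ∈ s, W.counit i.1 • f i.2 := by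
        refine Finset.sum_congr rfl fun i _ => ?_
        rw [cone_apply, smul_mul_assoc, one_mul]
    _ = f (∑ i ∈ s, W.counit i.1 • i.2) := by rw [map_sum]; simp only [map_smul]
    _ = f h := by rw [sum_eps_first W hs]

theorem cmul_mulRight (f g : H →ₗ[k] M) (c : M) :
    cmul W f (mulRight k c ∘ₗ g) = mulRight k c ∘ₗ cmul W f g := by
  refine LinearMap.ext fun h => ?_
  obtain ⟨s, hs⟩ := TensorProduct.exists_finset (W.comul h)
  simp only [coe_comp, Function.comp_apply, mulRight_apply]
  rw [cmul_apply_rep W _ _ hs, cmul_apply_rep W _ _ hs, Finset.sum_mul]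
  exact Finset.sum_congr rfl fun i _ => by simp [mul_assoc]

theorem cmul_mulLeft_snd (f g : H →ₗ[k] M) (c : M) :
    cmul W f (mulLeft k c ∘ₗ g) = cmul W (mulRight k c ∘ₗ f) g := by
  refine LinearMap.ext fun h => ?_
  obtain ⟨s, hs⟩ := TensorProduct.exists_finset (W.comul h)
  rw [cmul_apply_rep W _ _ hs, cmul_apply_rep W _ _ hs]
  exact Finset.sum_congr rfl fun i _ => by simp [mul_assoc]

theorem cmul_smul_right (f : H →ₗ[k] M) (c : M) :
    cmul W f (toSpanSingleton k M c ∘ₗ W.counit) = mulRight k c ∘ₗ f := by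
  refine LinearMap.ext fun h => ?_
  obtain ⟨s, hs⟩ := TensorProduct.exists_finset (W.comul h)
  rw [cmul_apply_rep W _ _ hs]
  simp only [coe_comp, Function.comp_apply, mulRight_apply, toSpanSingleton_apply]
  calc ∑ i ∈ s, f i.1 * W.counit i.2 • c = ∑ i ∈ s, (W.counit i.2 • f i.1) * c := by
        refine Finset.sum_congr rfl fun i _ => ?_
        rw [mul_smul_comm, smul_mul_assoc]
    _ = (∑ i ∈ s, W.counit i.2 • f i.1) * c := by rw [Finset.sum_mul]
    _ = f (∑ i ∈ s, W.counit i.2 • i.1) * c := by rw [map_sum]; simp only [map_smul]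
    _ = f h * c := by rw [sum_eps_second W hs]

theorem cmul_smul_left (g : H →ₗ[k] M) (c : M) :
    cmul W (toSpanSingleton k M c ∘ₗ W.counit) g = mulLeft k c ∘ₗ g := by
  refine LinearMap.ext fun h => ?_
  obtain ⟨s, hs⟩ := TensorProduct.exists_finset (W.comul h)
  rw [cmul_apply_rep W _ _ hs]
  simp only [coe_comp, Function.comp_apply, mulLeft_apply, toSpanSingleton_apply]
  calc ∑ i ∈ s, (W.counit i.1 • c) * g i.2 = ∑ i ∈ s, c * (W.counit i.1 • g i.2) := by
        refine Finset.sum_congr rfl fun i _ => ?_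
        rw [smul_mul_assoc, mul_smul_comm]
    _ = c * (∑ i ∈ s, W.counit i.1 • g i.2) := by rw [Finset.mul_sum]
    _ = c * g (∑ i ∈ s, W.counit i.1 • i.2) := by rw [map_sum]; simp only [map_smul]
    _ = c * g h := by rw [sum_eps_first W hs]

theorem cmul_push {N : Type*} [Ring N] [Algebra k N] (χ : M →ₗ[k] N)
    (hmul : ∀ a b : M, χ (a * b) = χ a * χ b) (f g : H →ₗ[k] M) :
    χ ∘ₗ cmul W f g = cmul W (χ ∘ₗ f) (χ ∘ₗ g) := by
  refine LinearMap.ext fun h => ?_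
  obtain ⟨s, hs⟩ := TensorProduct.exists_finset (W.comul h)
  simp only [coe_comp, Function.comp_apply]
  rw [cmul_apply_rep W _ _ hs, cmul_apply_rep W _ _ hs, map_sum]
  exact Finset.sum_congr rfl fun i _ => hmul _ _

end Conv

end WHAux

namespace WHAux

variable {k H : Type*} [CommRing k] [Ring H] [Algebra k H] (W : WeakHopfAlgebra k H)

section ConvMore

variable {M : Type*} [Ring M] [Algebra k M]

theorem co2' (h : H) : (lTensor H W.comul) (W.comul h)
    = (TensorProduct.assoc k H H H) ((rTensor H W.comul) (W.comul h)) := by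
  rw [co2]; simp

theorem cmul_rmk (f g : H →ₗ[k] M) :
    cmul W (((TensorProduct.mk k M H).flip 1) ∘ₗ f) ((rTensor H g) ∘ₗ W.comul)
      = rTensor H (cmul W f g) ∘ₗ W.comul := by
  have key : LinearMap.mul' k (M ⊗[k] H) ∘ₗ
        TensorProduct.map (((TensorProduct.mk k M H).flip 1) ∘ₗ f) (rTensor H g)
        ∘ₗ (TensorProduct.assoc k H H H).toLinearMap
      = rTensor H (LinearMap.mul' k M ∘ₗ TensorProduct.map f g) :=
    TensorProduct.ext_threefold fun x y z => by
      simp [Algebra.TensorProduct.tmul_mul_tmul]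
  have e1 : TensorProduct.map (((TensorProduct.mk k M H).flip 1) ∘ₗ f) ((rTensor H g) ∘ₗ W.comul)
      = TensorProduct.map (((TensorProduct.mk k M H).flip 1) ∘ₗ f) (rTensor H g)
        ∘ₗ lTensor H W.comul :=
    TensorProduct.ext' fun x y => by simp
  have e2 : rTensor H (cmul W f g)
      = rTensor H (LinearMap.mul' k M ∘ₗ TensorProduct.map f g) ∘ₗ rTensor H W.comul :=
    TensorProduct.ext' fun x y => by simp [cmul_apply]
  refine LinearMap.ext fun h => ?_
  rw [cmul_apply, e1]
  simp only [coe_comp, Function.comp_apply]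
  rw [co2']
  have hk := DFunLike.congr_fun key ((rTensor H W.comul) (W.comul h))
  simp only [coe_comp, Function.comp_apply, LinearEquiv.coe_coe] at hk
  rw [hk]
  have h2 := DFunLike.congr_fun e2 (W.comul h)
  simp only [coe_comp, Function.comp_apply] at h2
  rw [h2]

theorem cmul_lmk (f g : H →ₗ[k] M) :
    cmul W ((lTensor H f) ∘ₗ W.comul) (((TensorProduct.mk k H M) 1) ∘ₗ g)
      = lTensor H (cmul W f g) ∘ₗ W.comul := by
  have key : LinearMap.mul' k (H ⊗[k] M) ∘ₗ
        TensorProduct.map (lTensor H f) (((TensorProduct.mk k H M) 1) ∘ₗ g)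
        ∘ₗ (TensorProduct.assoc k H H H).symm.toLinearMap
      = lTensor H (LinearMap.mul' k M ∘ₗ TensorProduct.map f g) :=
    ext3r fun x y z => by
      simp [Algebra.TensorProduct.tmul_mul_tmul]
  have e1 : TensorProduct.map ((lTensor H f) ∘ₗ W.comul) (((TensorProduct.mk k H M) 1) ∘ₗ g)
      = TensorProduct.map (lTensor H f) (((TensorProduct.mk k H M) 1) ∘ₗ g)
        ∘ₗ rTensor H W.comul :=
    TensorProduct.ext' fun x y => by simp
  have e2 : lTensor H (cmul W f g)
      = lTensor H (LinearMap.mul' k M ∘ₗ TensorProduct.map f g) ∘ₗ lTensor H W.comul :=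
    TensorProduct.ext' fun x y => by simp [cmul_apply]
  refine LinearMap.ext fun h => ?_
  rw [cmul_apply, e1]
  simp only [coe_comp, Function.comp_apply]
  rw [co2]
  have hk := DFunLike.congr_fun key ((lTensor H W.comul) (W.comul h))
  simp only [coe_comp, Function.comp_apply, LinearEquiv.coe_coe] at hk
  rw [hk]
  have h2 := DFunLike.congr_fun e2 (W.comul h)
  simp only [coe_comp, Function.comp_apply] at h2
  rw [h2]

end ConvMore

section Bpart

variable {B : Type*} [Ring B] [Algebra k B]

/-- the composite `v ∘ S`. -/
noncomputable def wm (v : H →ₐ[k] B) : H →ₗ[k] B := v.toLinearMap ∘ₗ W.antipode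

/-- All hypotheses of the structure theorem bundled. -/
structure Setup (lamB : B →ₗ[k] H ⊗[k] B) (rhoB : B →ₗ[k] B ⊗[k] H) (v : H →ₐ[k] B) : Prop where
  rmul : ∀ b b' : B, rhoB (b * b') = rhoB b * rhoB b'
  rone : rhoB 1 = 1
  rcounit : ∀ b, (TensorProduct.rid k B) ((LinearMap.lTensor B W.counit) (rhoB b)) = b
  rcoassoc : ∀ b, (TensorProduct.assoc k B H H) ((LinearMap.rTensor H rhoB) (rhoB b))
      = (LinearMap.lTensor B W.comul) (rhoB b)
  rweak : ∀ b : B, rhoB 1 * (b ⊗ₜ[k] (1 : H)) = (LinearMap.lTensor B W.εt) (rhoB b)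
  lmul : ∀ b b' : B, lamB (b * b') = lamB b * lamB b'
  lone : lamB 1 = 1
  lcounit : ∀ b, (TensorProduct.lid k B) ((LinearMap.rTensor B W.counit) (lamB b)) = b
  lcoassoc : ∀ b, (LinearMap.lTensor H lamB) (lamB b)
      = (TensorProduct.assoc k H H B) ((LinearMap.rTensor B W.comul) (lamB b))
  lweak : ∀ b : B, ((1 : H) ⊗ₜ[k] b) * lamB 1 = (LinearMap.rTensor B W.εs) (lamB b)
  bicomod : ∀ b, (TensorProduct.assoc k H B H) ((LinearMap.rTensor H lamB) (rhoB b))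
      = (LinearMap.lTensor H rhoB) (lamB b)
  vrho : ∀ h, rhoB (v h) = (LinearMap.rTensor H v.toLinearMap) (W.comul h)
  vlam : ∀ h, lamB (v h) = (LinearMap.lTensor H v.toLinearMap) (W.comul h)

variable {lamB : B →ₗ[k] H ⊗[k] B} {rhoB : B →ₗ[k] B ⊗[k] H} {v : H →ₐ[k] B}
theorem w_one : wm W v 1 = 1 := by
  simp [wm, S_one W]

variable (S : Setup W lamB rhoB v)

include S

theorem v_eps_t (h : H) : v (W.εt h) = algebraMap k B (W.counit h) := by
  have h1 : (lTensor H v.toLinearMap) (W.comul 1) = (1 : H) ⊗ₜ[k] (1 : B) := by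
    rw [← S.vlam, map_one v, S.lone, Algebra.TensorProduct.one_def]
  obtain ⟨s, hs⟩ := TensorProduct.exists_finset (W.comul 1)
  rw [eps_t_apply W h hs]
  rw [hs] at h1
  have h2 := congrArg ((TensorProduct.lid k B) ∘ (rTensor B (W.counit ∘ₗ mulRight k h))) h1
  simp only [Function.comp_apply, map_sum, rTensor_tmul, lTensor_tmul, coe_comp,
    mulRight_apply, TensorProduct.lid_tmul] at h2
  rw [map_sum]
  simp only [map_smul]
  rw [Algebra.algebraMap_eq_smul_one]
  simpa [one_mul] using h2

theorem v_eps_s (h : H) : v (W.εs h) = algebraMap k B (W.counit h) := by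
  have h1 : (rTensor H v.toLinearMap) (W.comul 1) = (1 : B) ⊗ₜ[k] (1 : H) := by
    rw [← S.vrho, map_one v, S.rone, Algebra.TensorProduct.one_def]
  obtain ⟨s, hs⟩ := TensorProduct.exists_finset (W.comul 1)
  rw [eps_s_apply W h hs]
  rw [hs] at h1
  have h2 := congrArg ((TensorProduct.rid k B) ∘ (lTensor B (W.counit ∘ₗ mulLeft k h))) h1
  simp only [Function.comp_apply, map_sum, rTensor_tmul, lTensor_tmul, coe_comp,
    mulLeft_apply, TensorProduct.rid_tmul] at h2
  rw [map_sum]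
  simp only [map_smul]
  rw [Algebra.algebraMap_eq_smul_one]
  simpa [mul_one] using h2

theorem cmul_vw : cmul W v.toLinearMap (wm W v) = cone W := by
  refine LinearMap.ext fun h => ?_
  obtain ⟨s, hs⟩ := TensorProduct.exists_finset (W.comul h)
  rw [cmul_apply_rep W _ _ hs, cone_apply]
  calc ∑ i ∈ s, v i.1 * (wm W v) i.2 = v (∑ i ∈ s, i.1 * W.antipode i.2) := by
        simp [wm, map_sum]
    _ = W.counit h • 1 := by
        rw [sum_mul_antipode W hs, v_eps_t W S, Algebra.algebraMap_eq_smul_one]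

theorem cmul_wv : cmul W (wm W v) v.toLinearMap = cone W := by
  refine LinearMap.ext fun h => ?_
  obtain ⟨s, hs⟩ := TensorProduct.exists_finset (W.comul h)
  rw [cmul_apply_rep W _ _ hs, cone_apply]
  calc ∑ i ∈ s, (wm W v) i.1 * v i.2 = v (∑ i ∈ s, W.antipode i.1 * i.2) := by
        simp [wm, map_sum]
    _ = W.counit h • 1 := by
        rw [sum_antipode_mul W hs, v_eps_s W S, Algebra.algebraMap_eq_smul_one]

/-- `ε` is "multiplicative relative to `B`": step 1, `εs h ⊗ 1 = ε h • 1` in `H ⊗ B`. -/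
theorem eps_s_tmul (h : H) :
    W.εs h ⊗ₜ[k] (1 : B) = W.counit h • ((1 : H) ⊗ₜ[k] (1 : B)) := by
  have comm_rT : ∀ (X : H ⊗[k] B) (c : B),
      (rTensor B W.εs) X * ((1 : H) ⊗ₜ[k] c) = rTensor B W.εs (X * ((1 : H) ⊗ₜ[k] c)) := by
    intro X c
    induction X using TensorProduct.induction_on with
    | zero => simp
    | tmul z b => simp [Algebra.TensorProduct.tmul_mul_tmul]
    | add u w hu hw => rw [map_add, add_mul, add_mul, hu, hw, map_add]
  have halpha : ∀ x : H, (rTensor B W.εs) (lamB (v x)) = (1 : H) ⊗ₜ[k] v x := by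
    intro x
    rw [← S.lweak (v x), S.lone, mul_one]
  have hlamv : lamB ∘ₗ v.toLinearMap = (lTensor H v.toLinearMap) ∘ₗ W.comul :=
    LinearMap.ext fun x => S.vlam x
  -- h1 : λ∘v convolved with (1⊗·)∘w is h ↦ h ⊗ 1
  have h1 : cmul W ((lTensor H v.toLinearMap) ∘ₗ W.comul)
        (((TensorProduct.mk k H B) 1) ∘ₗ wm W v)
      = (TensorProduct.mk k H B).flip 1 := by
    rw [cmul_lmk W v.toLinearMap (wm W v), cmul_vw W S]
    refine LinearMap.ext fun x => ?_
    obtain ⟨s, hs⟩ := TensorProduct.exists_finset (W.comul x)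
    simp only [coe_comp, Function.comp_apply, hs, map_sum, lTensor_tmul, cone_apply]
    calc ∑ i ∈ s, i.1 ⊗ₜ[k] (W.counit i.2 • (1 : B))
        = (∑ i ∈ s, W.counit i.2 • i.1) ⊗ₜ[k] (1 : B) := by
          rw [TensorProduct.sum_tmul]
          exact Finset.sum_congr rfl fun i _ => by
            rw [TensorProduct.tmul_smul, TensorProduct.smul_tmul']
      _ = x ⊗ₜ[k] (1 : B) := by rw [sum_eps_second W hs]
      _ = ((TensorProduct.mk k H B).flip 1) x := rfl
  obtain ⟨s, hs⟩ := TensorProduct.exists_finset (W.comul h)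
  -- compute α * γ two ways
  have hway1 : cmul W ((rTensor B W.εs) ∘ₗ lamB ∘ₗ v.toLinearMap)
        (((TensorProduct.mk k H B) 1) ∘ₗ wm W v) h = W.εs h ⊗ₜ[k] (1 : B) := by
    rw [cmul_apply_rep W _ _ hs]
    calc ∑ i ∈ s, ((rTensor B W.εs) ∘ₗ lamB ∘ₗ v.toLinearMap) i.1
          * (((TensorProduct.mk k H B) 1) ∘ₗ wm W v) i.2
        = (rTensor B W.εs) (∑ i ∈ s, (lamB (v i.1)) * ((1:H) ⊗ₜ[k] (wm W v) i.2)) := by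
          rw [map_sum]
          exact Finset.sum_congr rfl fun i _ => by
            simp only [coe_comp, Function.comp_apply, TensorProduct.mk_apply,
              AlgHom.toLinearMap_apply]
            rw [comm_rT]
      _ = (rTensor B W.εs) (cmul W ((lTensor H v.toLinearMap) ∘ₗ W.comul)
            (((TensorProduct.mk k H B) 1) ∘ₗ wm W v) h) := by
          rw [cmul_apply_rep W _ _ hs]
          congr 1
          exact Finset.sum_congr rfl fun i _ => by
            simp only [coe_comp, Function.comp_apply, TensorProduct.mk_apply, S.vlam]
      _ = W.εs h ⊗ₜ[k] (1 : B) := by rw [h1]; simp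
  have hway2 : cmul W ((rTensor B W.εs) ∘ₗ lamB ∘ₗ v.toLinearMap)
        (((TensorProduct.mk k H B) 1) ∘ₗ wm W v) h
      = W.counit h • ((1 : H) ⊗ₜ[k] (1 : B)) := by
    rw [cmul_apply_rep W _ _ hs]
    calc ∑ i ∈ s, ((rTensor B W.εs) ∘ₗ lamB ∘ₗ v.toLinearMap) i.1
          * (((TensorProduct.mk k H B) 1) ∘ₗ wm W v) i.2
        = ∑ i ∈ s, (1 : H) ⊗ₜ[k] (v i.1 * (wm W v) i.2) := by
          refine Finset.sum_congr rfl fun i _ => ?_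
          simp only [coe_comp, Function.comp_apply, TensorProduct.mk_apply,
            AlgHom.toLinearMap_apply]
          rw [halpha]
          simp [Algebra.TensorProduct.tmul_mul_tmul]
      _ = (1 : H) ⊗ₜ[k] (∑ i ∈ s, v i.1 * (wm W v) i.2) := by
          rw [TensorProduct.tmul_sum]
      _ = (1 : H) ⊗ₜ[k] ((cmul W v.toLinearMap (wm W v)) h) := by
          rw [cmul_apply_rep W _ _ hs]
          rfl
      _ = W.counit h • ((1 : H) ⊗ₜ[k] (1 : B)) := by
          rw [cmul_vw W S, cone_apply, TensorProduct.tmul_smul]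
  rw [← hway1, hway2]

/-- `ε(xy) • 1_B = (ε x ε y) • 1_B`. -/
theorem counit_mul_smul (x y : H) :
    W.counit (x * y) • (1 : B) = (W.counit x * W.counit y) • (1 : B) := by
  have h1 := congrArg (LinearMap.mul' k B ∘
    (TensorProduct.map (v.toLinearMap ∘ₗ W.εs ∘ₗ mulRight k y) (LinearMap.id : B →ₗ[k] B)))
    (eps_s_tmul W S x)
  simp only [Function.comp_apply, map_smul, TensorProduct.map_tmul, coe_comp,
    mulRight_apply, id_coe, id_eq, mul'_apply] at h1
  rw [one_mul] at h1
  calc W.counit (x * y) • (1 : B) = v (W.εs (x * y)) := by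
        rw [v_eps_s W S, Algebra.algebraMap_eq_smul_one]
    _ = v (W.εs (W.εs x * y)) := by rw [← eps_s_mul]
    _ = W.counit x • v (W.εs y) := by
        rw [← mul_one (v (W.εs (W.εs x * y)))]
        have h1' : v (W.εs (W.εs x * y)) * 1 = W.counit x • (v (W.εs y) * 1) := h1
        rw [h1', mul_one]
    _ = (W.counit x * W.counit y) • (1 : B) := by
        rw [v_eps_s W S, Algebra.algebraMap_eq_smul_one, smul_smul]

end Bpart

end WHAux

namespace WHAux

set_option synthInstance.maxHeartbeats 1000000
set_option maxHeartbeats 1000000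

variable {k H : Type*} [CommRing k] [Ring H] [Algebra k H] (W : WeakHopfAlgebra k H)
variable {B : Type*} [Ring B] [Algebra k B]
variable {lamB : B →ₗ[k] H ⊗[k] B} {rhoB : B →ₗ[k] B ⊗[k] H} {v : H →ₐ[k] B}

/-- The 6-linear evaluation map used in the proof that `v∘S` is antimultiplicative. -/
noncomputable def Theta (v : H →ₐ[k] B) :
    ((H ⊗[k] H) ⊗[k] H) ⊗[k] ((H ⊗[k] H) ⊗[k] H) →ₗ[k] B :=
  LinearMap.mul' k B ∘ₗ rTensor B (LinearMap.mul' k B) ∘ₗ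
    TensorProduct.map
      (TensorProduct.map (wm W v ∘ₗ LinearMap.mul' k H) (v.toLinearMap ∘ₗ LinearMap.mul' k H)
        ∘ₗ (TensorProduct.tensorTensorTensorComm k H H H H).toLinearMap)
      (LinearMap.mul' k B ∘ₗ TensorProduct.map (wm W v) (wm W v)
        ∘ₗ (TensorProduct.comm k H H).toLinearMap)
    ∘ₗ (TensorProduct.tensorTensorTensorComm k (H ⊗[k] H) H (H ⊗[k] H) H).toLinearMap

/-- The inner evaluation map `Ψ(u ⊗ u') = v(u₁u'₁) (w(u'₂) w(u₂))`. -/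
noncomputable def Psi (v : H →ₐ[k] B) : (H ⊗[k] H) ⊗[k] (H ⊗[k] H) →ₗ[k] B :=
  LinearMap.mul' k B ∘ₗ
    TensorProduct.map (v.toLinearMap ∘ₗ LinearMap.mul' k H)
      (LinearMap.mul' k B ∘ₗ TensorProduct.map (wm W v) (wm W v)
        ∘ₗ (TensorProduct.comm k H H).toLinearMap)
    ∘ₗ (TensorProduct.tensorTensorTensorComm k H H H H).toLinearMap

theorem Theta_tmul (a p b c q d : H) :
    Theta W v (((a ⊗ₜ[k] p) ⊗ₜ[k] b) ⊗ₜ[k] ((c ⊗ₜ[k] q) ⊗ₜ[k] d))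
      = (wm W v (a * c) * v (p * q)) * (wm W v d * wm W v b) := by
  simp [Theta]

theorem Psi_tmul (p b q d : H) :
    Psi W v ((p ⊗ₜ[k] b) ⊗ₜ[k] (q ⊗ₜ[k] d)) = v (p * q) * (wm W v d * wm W v b) := by
  simp [Psi]

theorem Theta_left (u u' : H ⊗[k] H) (b d : H) :
    Theta W v ((u ⊗ₜ[k] b) ⊗ₜ[k] (u' ⊗ₜ[k] d))
      = LinearMap.mul' k B (TensorProduct.map (wm W v) v.toLinearMap (u * u'))
          * (wm W v d * wm W v b) := by
  induction u using TensorProduct.induction_on with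
  | zero => simp only [TensorProduct.zero_tmul, map_zero, zero_mul]
  | add u₁ u₂ h₁ h₂ =>
      simp only [TensorProduct.add_tmul, map_add, add_mul]
      rw [h₁, h₂]
  | tmul a p =>
      induction u' using TensorProduct.induction_on with
      | zero => simp only [TensorProduct.zero_tmul, TensorProduct.tmul_zero, map_zero,
          mul_zero, zero_mul]
      | add w₁ w₂ g₁ g₂ =>
          simp only [TensorProduct.add_tmul, TensorProduct.tmul_add, map_add, mul_add, add_mul]
          rw [g₁, g₂]
      | tmul c q =>
          rw [Theta_tmul, Algebra.TensorProduct.tmul_mul_tmul]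
          simp

theorem Theta_right (a c : H) (u u' : H ⊗[k] H) :
    Theta W v (((TensorProduct.assoc k H H H).symm (a ⊗ₜ[k] u))
        ⊗ₜ[k] ((TensorProduct.assoc k H H H).symm (c ⊗ₜ[k] u')))
      = wm W v (a * c) * Psi W v (u ⊗ₜ[k] u') := by
  induction u using TensorProduct.induction_on with
  | zero => simp only [TensorProduct.tmul_zero, TensorProduct.zero_tmul, map_zero,
      zero_mul, mul_zero]
  | add u₁ u₂ h₁ h₂ =>
      simp only [TensorProduct.tmul_add, TensorProduct.add_tmul, map_add, mul_add, add_mul]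
      rw [h₁, h₂]
  | tmul p b =>
      induction u' using TensorProduct.induction_on with
      | zero => simp only [TensorProduct.tmul_zero, TensorProduct.zero_tmul, map_zero,
          zero_mul, mul_zero]
      | add w₁ w₂ g₁ g₂ =>
          simp only [TensorProduct.tmul_add, TensorProduct.add_tmul, map_add, mul_add, add_mul]
          rw [g₁, g₂]
      | tmul q d =>
          rw [TensorProduct.assoc_symm_tmul, TensorProduct.assoc_symm_tmul, Theta_tmul,
            Psi_tmul, mul_assoc]

variable (S : Setup W lamB rhoB v)
include S

theorem Psi_comul (b d : H) :
    Psi W v (W.comul b ⊗ₜ[k] W.comul d) = (W.counit b * W.counit d) • (1 : B) := by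
  obtain ⟨sb, hb⟩ := TensorProduct.exists_finset (W.comul b)
  obtain ⟨sd, hd⟩ := TensorProduct.exists_finset (W.comul d)
  rw [hb, hd, TensorProduct.sum_tmul]
  simp only [TensorProduct.tmul_sum, map_sum]
  have hstep : ∀ i ∈ sb, ∑ j ∈ sd, Psi W v ((i.1 ⊗ₜ[k] i.2) ⊗ₜ[k] (j.1 ⊗ₜ[k] j.2))
      = W.counit d • (v i.1 * wm W v i.2) := by
    intro i _
    calc ∑ j ∈ sd, Psi W v ((i.1 ⊗ₜ[k] i.2) ⊗ₜ[k] (j.1 ⊗ₜ[k] j.2))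
        = ∑ j ∈ sd, v i.1 * ((v j.1 * wm W v j.2) * wm W v i.2) := by
          refine Finset.sum_congr rfl fun j _ => ?_
          rw [Psi_tmul, map_mul, mul_assoc, mul_assoc]
      _ = v i.1 * ((∑ j ∈ sd, v j.1 * wm W v j.2) * wm W v i.2) := by
          rw [Finset.sum_mul, Finset.mul_sum]
      _ = v i.1 * ((W.counit d • (1:B)) * wm W v i.2) := by
          have := cmul_apply_rep W v.toLinearMap (wm W v) hd
          rw [cmul_vw W S, cone_apply] at this
          simp only [AlgHom.toLinearMap_apply] at this
          rw [← this]
      _ = W.counit d • (v i.1 * wm W v i.2) := by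
          rw [smul_mul_assoc, one_mul, mul_smul_comm]
  rw [Finset.sum_congr rfl hstep]
  rw [← Finset.smul_sum]
  have := cmul_apply_rep W v.toLinearMap (wm W v) hb
  rw [cmul_vw W S, cone_apply] at this
  simp only [AlgHom.toLinearMap_apply] at this
  rw [← this, smul_smul, mul_comm (W.counit d) (W.counit b)]

theorem w_mul (x y : H) : wm W v (x * y) = wm W v y * wm W v x := by
  obtain ⟨sx, hx⟩ := TensorProduct.exists_finset (W.comul x)
  obtain ⟨sy, hy⟩ := TensorProduct.exists_finset (W.comul y)
  have hXl : (rTensor H W.comul) (W.comul x) = ∑ i ∈ sx, W.comul i.1 ⊗ₜ[k] i.2 := by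
    rw [hx]; simp [map_sum]
  have hYl : (rTensor H W.comul) (W.comul y) = ∑ j ∈ sy, W.comul j.1 ⊗ₜ[k] j.2 := by
    rw [hy]; simp [map_sum]
  have hXr : (rTensor H W.comul) (W.comul x)
      = ∑ i ∈ sx, (TensorProduct.assoc k H H H).symm (i.1 ⊗ₜ[k] W.comul i.2) := by
    rw [co2, hx]
    simp [map_sum]
  have hYr : (rTensor H W.comul) (W.comul y)
      = ∑ j ∈ sy, (TensorProduct.assoc k H H H).symm (j.1 ⊗ₜ[k] W.comul j.2) := by
    rw [co2, hy]
    simp [map_sum]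
  have hleft : Theta W v ((rTensor H W.comul) (W.comul x) ⊗ₜ[k] (rTensor H W.comul) (W.comul y))
      = wm W v y * wm W v x := by
    rw [hXl, hYl, TensorProduct.sum_tmul]
    simp only [TensorProduct.tmul_sum, map_sum]
    have hsmul : ∀ (α β : k) (X Y : B), (α • X) * (β • Y) = (α * β) • (X * Y) :=
      fun α β X Y => by rw [smul_mul_assoc, mul_smul_comm, smul_smul]
    calc ∑ i ∈ sx, ∑ j ∈ sy,
          Theta W v ((W.comul i.1 ⊗ₜ[k] i.2) ⊗ₜ[k] (W.comul j.1 ⊗ₜ[k] j.2))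
        = ∑ i ∈ sx, ∑ j ∈ sy,
            (W.counit j.1 • wm W v j.2) * (W.counit i.1 • wm W v i.2) := by
          refine Finset.sum_congr rfl fun i _ => Finset.sum_congr rfl fun j _ => ?_
          rw [Theta_left, ← W.comul_mul]
          have hc : LinearMap.mul' k B
              (TensorProduct.map (wm W v) v.toLinearMap (W.comul (i.1 * j.1)))
              = W.counit (i.1 * j.1) • (1 : B) := by
            have h3 := DFunLike.congr_fun (cmul_wv W S) (i.1 * j.1)
            rw [cone_apply] at h3
            exact h3
          rw [hc]
          have h4 : (W.counit (i.1 * j.1) • (1 : B)) * (wm W v j.2 * wm W v i.2)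
              = ((W.counit i.1 * W.counit j.1) • (1 : B)) * (wm W v j.2 * wm W v i.2) := by
            rw [counit_mul_smul W S]
          rw [h4, smul_mul_assoc, one_mul, hsmul, mul_comm (W.counit j.1) (W.counit i.1)]
      _ = ∑ i ∈ sx, (∑ j ∈ sy, W.counit j.1 • wm W v j.2) * (W.counit i.1 • wm W v i.2) := by
          refine Finset.sum_congr rfl fun i _ => ?_
          rw [Finset.sum_mul]
      _ = (∑ j ∈ sy, W.counit j.1 • wm W v j.2) * (∑ i ∈ sx, W.counit i.1 • wm W v i.2) := by
          rw [Finset.mul_sum]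
      _ = wm W v y * wm W v x := by
          have e1 : (∑ j ∈ sy, W.counit j.1 • wm W v j.2) = wm W v y := by
            calc ∑ j ∈ sy, W.counit j.1 • wm W v j.2
                = wm W v (∑ j ∈ sy, W.counit j.1 • j.2) := by
                  rw [map_sum]; simp only [map_smul]
              _ = wm W v y := by rw [sum_eps_first W hy]
          have e2 : (∑ i ∈ sx, W.counit i.1 • wm W v i.2) = wm W v x := by
            calc ∑ i ∈ sx, W.counit i.1 • wm W v i.2
                = wm W v (∑ i ∈ sx, W.counit i.1 • i.2) := by
                  rw [map_sum]; simp only [map_smul]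
              _ = wm W v x := by rw [sum_eps_first W hx]
          rw [e1, e2]
  have hright : Theta W v ((rTensor H W.comul) (W.comul x) ⊗ₜ[k] (rTensor H W.comul) (W.comul y))
      = wm W v (x * y) := by
    rw [hXr, hYr, TensorProduct.sum_tmul]
    simp only [TensorProduct.tmul_sum, map_sum]
    have hij : ∀ i ∈ sx, ∀ j ∈ sy,
        Theta W v ((TensorProduct.assoc k H H H).symm (i.1 ⊗ₜ[k] W.comul i.2)
            ⊗ₜ[k] (TensorProduct.assoc k H H H).symm (j.1 ⊗ₜ[k] W.comul j.2))
          = (W.counit i.2 * W.counit j.2) • wm W v (i.1 * j.1) := by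
      intro i _ j _
      rw [Theta_right, Psi_comul W S, mul_smul_comm, mul_one]
    calc ∑ i ∈ sx, ∑ j ∈ sy, Theta W v ((TensorProduct.assoc k H H H).symm (i.1 ⊗ₜ[k] W.comul i.2)
            ⊗ₜ[k] (TensorProduct.assoc k H H H).symm (j.1 ⊗ₜ[k] W.comul j.2))
        = ∑ i ∈ sx, ∑ j ∈ sy, (W.counit i.2 * W.counit j.2) • wm W v (i.1 * j.1) := by
          exact Finset.sum_congr rfl fun i hi => Finset.sum_congr rfl fun j hj => hij i hi j hj
      _ = wm W v ((∑ i ∈ sx, W.counit i.2 • i.1) * (∑ j ∈ sy, W.counit j.2 • j.1)) := by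
          have hsmulH : ∀ (α β : k) (X Y : H), (α • X) * (β • Y) = (α * β) • (X * Y) :=
            fun α β X Y => by rw [smul_mul_assoc, mul_smul_comm, smul_smul]
          rw [Finset.sum_mul]
          rw [map_sum]
          refine Finset.sum_congr rfl fun i _ => ?_
          rw [Finset.mul_sum, map_sum]
          refine Finset.sum_congr rfl fun j _ => ?_
          rw [hsmulH, map_smul]
      _ = wm W v (x * y) := by rw [sum_eps_second W hx, sum_eps_second W hy]
  rw [← hright, hleft]

end WHAux

namespace WHAux

set_option maxHeartbeats 1000000
set_option linter.unusedSectionVars false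
set_option synthInstance.maxHeartbeats 1000000

variable {k H : Type*} [CommRing k] [Ring H] [Algebra k H] (W : WeakHopfAlgebra k H)
variable {B : Type*} [Ring B] [Algebra k B]
variable {lamB : B →ₗ[k] H ⊗[k] B} {rhoB : B →ₗ[k] B ⊗[k] H} {v : H →ₐ[k] B}

theorem Emap_apply (b : B) :
    W.Emap rhoB v b = LinearMap.mul' k B ((lTensor B (wm W v)) (rhoB b)) := rfl

variable (S : Setup W lamB rhoB v)
include S

theorem rho_v_comp : rhoB ∘ₗ v.toLinearMap = rTensor H v.toLinearMap ∘ₗ W.comul :=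
  LinearMap.ext fun h => S.vrho h

theorem cmul_QP : cmul W (rhoB ∘ₗ v.toLinearMap) (rhoB ∘ₗ wm W v) = cone W := by
  calc cmul W (rhoB ∘ₗ v.toLinearMap) (rhoB ∘ₗ wm W v)
      = rhoB ∘ₗ cmul W v.toLinearMap (wm W v) := (cmul_push W rhoB S.rmul _ _).symm
    _ = rhoB ∘ₗ cone W := by rw [cmul_vw W S]
    _ = cone W := by
        refine LinearMap.ext fun h => ?_
        simp only [coe_comp, Function.comp_apply, cone_apply, map_smul, S.rone]

theorem conv_h1 : cmul W (((TensorProduct.mk k B H).flip 1) ∘ₗ wm W v)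
    (rhoB ∘ₗ v.toLinearMap) = (TensorProduct.mk k B H) 1 := by
  rw [rho_v_comp W S, cmul_rmk W (wm W v) v.toLinearMap, cmul_wv W S]
  refine LinearMap.ext fun h => ?_
  obtain ⟨s, hs⟩ := TensorProduct.exists_finset (W.comul h)
  simp only [coe_comp, Function.comp_apply, hs, map_sum, rTensor_tmul, cone_apply,
    TensorProduct.mk_apply]
  calc ∑ i ∈ s, (W.counit i.1 • (1 : B)) ⊗ₜ[k] i.2
      = (1 : B) ⊗ₜ[k] (∑ i ∈ s, W.counit i.1 • i.2) := by
        rw [TensorProduct.tmul_sum]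
        exact Finset.sum_congr rfl fun i _ => by
          rw [TensorProduct.smul_tmul]
    _ = (1 : B) ⊗ₜ[k] h := by rw [sum_eps_first W hs]

theorem key_LP : cmul W ((TensorProduct.mk k B H) 1) (rhoB ∘ₗ wm W v)
    = ((TensorProduct.mk k B H).flip 1) ∘ₗ wm W v := by
  calc cmul W ((TensorProduct.mk k B H) 1) (rhoB ∘ₗ wm W v)
      = cmul W (cmul W (((TensorProduct.mk k B H).flip 1) ∘ₗ wm W v)
          (rhoB ∘ₗ v.toLinearMap)) (rhoB ∘ₗ wm W v) := by rw [conv_h1 W S]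
    _ = cmul W (((TensorProduct.mk k B H).flip 1) ∘ₗ wm W v)
          (cmul W (rhoB ∘ₗ v.toLinearMap) (rhoB ∘ₗ wm W v)) := cmul_assoc W _ _ _
    _ = cmul W (((TensorProduct.mk k B H).flip 1) ∘ₗ wm W v) (cone W) := by rw [cmul_QP W S]
    _ = ((TensorProduct.mk k B H).flip 1) ∘ₗ wm W v := cmul_cone_right W _

theorem rho_Emap (b : B) :
    rhoB (W.Emap rhoB v b) = (W.Emap rhoB v b) ⊗ₜ[k] (1 : H) := by
  obtain ⟨s, hs⟩ := TensorProduct.exists_finset (rhoB b)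
  have hE : W.Emap rhoB v b = ∑ i ∈ s, i.1 * wm W v i.2 := by
    rw [Emap_apply, hs]
    simp [map_sum]
  have h1 : rhoB (W.Emap rhoB v b) = ∑ i ∈ s, rhoB i.1 * rhoB (wm W v i.2) := by
    rw [hE, map_sum]
    exact Finset.sum_congr rfl fun i _ => S.rmul _ _
  have hco : (rTensor H rhoB) (rhoB b)
      = (TensorProduct.assoc k B H H).symm ((lTensor B W.comul) (rhoB b)) := by
    rw [← S.rcoassoc b]
    simp
  set Ω : (B ⊗[k] H) ⊗[k] H →ₗ[k] B ⊗[k] H :=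
    LinearMap.mul' k (B ⊗[k] H) ∘ₗ lTensor (B ⊗[k] H) (rhoB ∘ₗ wm W v) with hΩ
  have h2 : ∑ i ∈ s, rhoB i.1 * rhoB (wm W v i.2) = Ω ((rTensor H rhoB) (rhoB b)) := by
    rw [hs]
    simp [hΩ, map_sum]
  have h3 : ∀ (c : B) (u : H ⊗[k] H), Ω ((TensorProduct.assoc k B H H).symm (c ⊗ₜ[k] u))
      = (c ⊗ₜ[k] (1 : H)) * LinearMap.mul' k (B ⊗[k] H)
          (TensorProduct.map ((TensorProduct.mk k B H) 1) (rhoB ∘ₗ wm W v) u) := by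
    intro c u
    induction u using TensorProduct.induction_on with
    | zero => simp
    | add u₁ u₂ g₁ g₂ =>
        simp only [TensorProduct.tmul_add, map_add, mul_add]
        rw [g₁, g₂]
    | tmul x y =>
        rw [TensorProduct.assoc_symm_tmul]
        simp only [hΩ, coe_comp, Function.comp_apply, lTensor_tmul, TensorProduct.map_tmul,
          mul'_apply, TensorProduct.mk_apply]
        rw [← mul_assoc, Algebra.TensorProduct.tmul_mul_tmul, mul_one, one_mul]
  calc rhoB (W.Emap rhoB v b) = Ω ((rTensor H rhoB) (rhoB b)) := by rw [h1, h2]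
    _ = Ω ((TensorProduct.assoc k B H H).symm ((lTensor B W.comul) (rhoB b))) := by rw [hco]
    _ = ∑ i ∈ s, (i.1 ⊗ₜ[k] (1 : H)) * (cmul W ((TensorProduct.mk k B H) 1)
          (rhoB ∘ₗ wm W v) i.2) := by
        rw [hs]
        simp only [map_sum, lTensor_tmul]
        exact Finset.sum_congr rfl fun i _ => by rw [h3, cmul_apply]
    _ = ∑ i ∈ s, (i.1 ⊗ₜ[k] (1 : H)) * ((wm W v i.2) ⊗ₜ[k] (1 : H)) := by
        rw [key_LP W S]
        rfl
    _ = (∑ i ∈ s, i.1 * wm W v i.2) ⊗ₜ[k] (1 : H) := by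
        rw [TensorProduct.sum_tmul]
        exact Finset.sum_congr rfl fun i _ => by
          rw [Algebra.TensorProduct.tmul_mul_tmul, mul_one]
    _ = (W.Emap rhoB v b) ⊗ₜ[k] (1 : H) := by rw [hE]

theorem mem_coinv_iff (b : B) :
    b ∈ W.coinvariants rhoB ↔ rhoB b = b ⊗ₜ[k] (1 : H) := by
  have hw : (lTensor B W.εt) (rhoB b) = b ⊗ₜ[k] (1 : H) := by
    rw [← S.rweak b, S.rone, one_mul]
  constructor
  · intro hmem
    exact Eq.trans hmem hw
  · intro h
    show rhoB b = (lTensor B W.εt) (rhoB b)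
    exact h.trans hw.symm

theorem Emap_mem (b : B) : W.Emap rhoB v b ∈ W.coinvariants rhoB :=
  (mem_coinv_iff W S _).2 (rho_Emap W S b)

theorem Emap_left (a b : B) (ha : rhoB a = a ⊗ₜ[k] (1 : H)) :
    W.Emap rhoB v (a * b) = a * W.Emap rhoB v b := by
  obtain ⟨s, hs⟩ := TensorProduct.exists_finset (rhoB b)
  have h1 : rhoB (a * b) = ∑ i ∈ s, (a * i.1) ⊗ₜ[k] i.2 := by
    rw [S.rmul, ha, hs, Finset.mul_sum]
    exact Finset.sum_congr rfl fun i _ => by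
      rw [Algebra.TensorProduct.tmul_mul_tmul, one_mul]
  rw [Emap_apply, Emap_apply, h1, hs]
  simp only [map_sum, lTensor_tmul, mul'_apply, Finset.mul_sum]
  exact Finset.sum_congr rfl fun i _ => by rw [mul_assoc]

theorem Emap_id (a : B) (ha : rhoB a = a ⊗ₜ[k] (1 : H)) : W.Emap rhoB v a = a := by
  rw [Emap_apply, ha]
  simp [w_one W]

theorem Emap_v (h : H) : W.Emap rhoB v (v h) = W.counit h • (1 : B) := by
  obtain ⟨s, hs⟩ := TensorProduct.exists_finset (W.comul h)
  rw [Emap_apply, S.vrho, hs]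
  simp only [map_sum, rTensor_tmul, lTensor_tmul, mul'_apply]
  have := cmul_apply_rep W v.toLinearMap (wm W v) hs
  rw [cmul_vw W S, cone_apply] at this
  exact this.symm

theorem Emap_mul_v (a : B) (h : H) (ha : rhoB a = a ⊗ₜ[k] (1 : H)) :
    W.Emap rhoB v (a * v h) = W.counit h • a := by
  rw [Emap_left W S a (v h) ha, Emap_v W S, mul_smul_comm, mul_one]

/-- key fact: `(id ⊗ E) ∘ λ = λ` on coinvariants. -/
theorem lam_Emap (a : B) (ha : rhoB a = a ⊗ₜ[k] (1 : H)) :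
    (lTensor H (W.Emap rhoB v)) (lamB a) = lamB a := by
  obtain ⟨s, hs⟩ := TensorProduct.exists_finset (lamB a)
  have h1 : (lTensor H rhoB) (lamB a) = ∑ i ∈ s, i.1 ⊗ₜ[k] (i.2 ⊗ₜ[k] (1 : H)) := by
    rw [← S.bicomod a, ha]
    rw [show (rTensor H lamB) (a ⊗ₜ[k] (1 : H)) = (lamB a) ⊗ₜ[k] (1 : H) from rfl]
    rw [hs, TensorProduct.sum_tmul, map_sum]
    exact Finset.sum_congr rfl fun i _ => by rw [TensorProduct.assoc_tmul]
  have h2 : lTensor H (W.Emap rhoB v)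
      = lTensor H (LinearMap.mul' k B ∘ₗ lTensor B (wm W v)) ∘ₗ lTensor H rhoB := by
    rw [← lTensor_comp]
    rfl
  rw [h2]
  simp only [coe_comp, Function.comp_apply]
  rw [h1, map_sum]
  rw [hs]
  exact Finset.sum_congr rfl fun i _ => by
    simp [w_one W]

end WHAux

namespace WHAux

set_option maxHeartbeats 1000000
set_option synthInstance.maxHeartbeats 1000000
set_option linter.unusedSectionVars false

variable {k H : Type*} [CommRing k] [Ring H] [Algebra k H] (W : WeakHopfAlgebra k H)
variable {B : Type*} [Ring B] [Algebra k B]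
variable {lamB : B →ₗ[k] H ⊗[k] B} {rhoB : B →ₗ[k] B ⊗[k] H} {v : H →ₐ[k] B}
variable (S : Setup W lamB rhoB v)
include S

/-- `E` corestricted to the coinvariants. -/
noncomputable def EA : B →ₗ[k] ↥(W.coinvariants rhoB) :=
  LinearMap.codRestrict _ (W.Emap rhoB v) (Emap_mem W S)

theorem EA_coe (b : B) : (EA W S b : B) = W.Emap rhoB v b := rfl

theorem coe_rho (a : ↥(W.coinvariants rhoB)) : rhoB ↑a = (↑a : B) ⊗ₜ[k] (1 : H) :=
  (mem_coinv_iff W S _).1 a.2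

theorem EA_of_mem (a : ↥(W.coinvariants rhoB)) : EA W S ↑a = a :=
  Subtype.ext (Emap_id W S ↑a (coe_rho W S a))

/-- the unit of `A`. -/
noncomputable def oneA : ↥(W.coinvariants rhoB) :=
  ⟨1, (mem_coinv_iff W S 1).2 (by rw [S.rone, Algebra.TensorProduct.one_def])⟩

theorem oneA_coe : ((oneA W S : ↥(W.coinvariants rhoB)) : B) = 1 := rfl

theorem mulA_mem (a b : ↥(W.coinvariants rhoB)) : (↑a * ↑b : B) ∈ W.coinvariants rhoB := by
  refine (mem_coinv_iff W S _).2 ?_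
  rw [S.rmul, coe_rho W S a, coe_rho W S b, Algebra.TensorProduct.tmul_mul_tmul, mul_one]

/-- the multiplication of `A`. -/
noncomputable def mulA : ↥(W.coinvariants rhoB) →ₗ[k] ↥(W.coinvariants rhoB)
    →ₗ[k] ↥(W.coinvariants rhoB) :=
  LinearMap.mk₂ k (fun a b => ⟨↑a * ↑b, mulA_mem W S a b⟩)
    (fun a a' b => Subtype.ext (by simp [add_mul]))
    (fun c a b => Subtype.ext (by simp [smul_mul_assoc]))
    (fun a b b' => Subtype.ext (by simp [mul_add]))
    (fun c a b => Subtype.ext (by simp [mul_smul_comm]))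

theorem mulA_coe (a b : ↥(W.coinvariants rhoB)) :
    ((mulA W S a b : ↥(W.coinvariants rhoB)) : B) = ↑a * ↑b := rfl

/-- the action of `H` on `A`. -/
noncomputable def actA : H →ₗ[k] ↥(W.coinvariants rhoB) →ₗ[k] ↥(W.coinvariants rhoB) :=
  LinearMap.mk₂ k (fun h a => EA W S (v h * ↑a))
    (fun h h' a => by rw [map_add, add_mul, map_add])
    (fun c h a => by rw [map_smul, smul_mul_assoc, map_smul])
    (fun h a a' => by simp [mul_add])
    (fun c h a => by simp [mul_smul_comm])

theorem actA_coe (h : H) (a : ↥(W.coinvariants rhoB)) :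
    ((actA W S h a : ↥(W.coinvariants rhoB)) : B) = W.Emap rhoB v (v h * ↑a) := rfl

theorem actA_conv (h : H) (a : ↥(W.coinvariants rhoB)) :
    ((actA W S h a : ↥(W.coinvariants rhoB)) : B)
      = cmul W (mulRight k (↑a : B) ∘ₗ v.toLinearMap) (wm W v) h := by
  obtain ⟨s, hs⟩ := TensorProduct.exists_finset (W.comul h)
  rw [actA_coe, Emap_apply]
  have h1 : rhoB (v h * ↑a) = ∑ i ∈ s, (v i.1 * ↑a) ⊗ₜ[k] i.2 := by
    rw [S.rmul, coe_rho W S a, S.vrho, hs]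
    simp only [map_sum, rTensor_tmul, Finset.sum_mul]
    refine Finset.sum_congr rfl fun i _ => ?_
    rw [Algebra.TensorProduct.tmul_mul_tmul, mul_one]
    rfl
  rw [h1, cmul_apply_rep W _ _ hs]
  simp [map_sum]

theorem act_mul_act (h h' : H) (a : ↥(W.coinvariants rhoB)) :
    actA W S (h * h') a = actA W S h (actA W S h' a) := by
  apply Subtype.ext
  rw [actA_conv W S, actA_conv W S]
  obtain ⟨sp, hp⟩ := TensorProduct.exists_finset (W.comul h)
  obtain ⟨sq, hq⟩ := TensorProduct.exists_finset (W.comul h')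
  have hrep : W.comul (h * h') = ∑ p ∈ sp ×ˢ sq, (p.1.1 * p.2.1) ⊗ₜ[k] (p.1.2 * p.2.2) := by
    rw [W.comul_mul, hp, hq, Finset.sum_mul_sum, Finset.sum_product]
    exact Finset.sum_congr rfl fun i _ => Finset.sum_congr rfl fun j _ => by
      rw [Algebra.TensorProduct.tmul_mul_tmul]
  rw [cmul_apply_rep W _ _ hrep, cmul_apply_rep W _ _ hp, Finset.sum_product]
  refine Finset.sum_congr rfl fun i _ => ?_
  simp only [coe_comp, Function.comp_apply, AlgHom.toLinearMap_apply, mulRight_apply]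
  rw [actA_conv W S, cmul_apply_rep W _ _ hq, Finset.mul_sum, Finset.sum_mul]
  refine Finset.sum_congr rfl fun j _ => ?_
  simp only [coe_comp, Function.comp_apply, AlgHom.toLinearMap_apply, mulRight_apply,
    map_mul, w_mul W S, mul_assoc]

theorem act_one (a : ↥(W.coinvariants rhoB)) : actA W S 1 a = a := by
  apply Subtype.ext
  rw [actA_coe, map_one v, one_mul, Emap_id W S ↑a (coe_rho W S a)]

omit S in
theorem cone_mulRight (c : B) :
    mulRight k c ∘ₗ (cone W : H →ₗ[k] B) = toSpanSingleton k B c ∘ₗ W.counit := by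
  refine LinearMap.ext fun h => ?_
  simp [cone_apply, smul_mul_assoc]

theorem act_mulA {ι : Type*} {s : Finset ι} {x y : ι → H} (h : H) (a b : ↥(W.coinvariants rhoB))
    (hrep : W.comul h = ∑ i ∈ s, x i ⊗ₜ[k] y i) :
    actA W S h (mulA W S a b) = ∑ i ∈ s, mulA W S (actA W S (x i) a) (actA W S (y i) b) := by
  apply Subtype.ext
  rw [actA_conv W S]
  have coesum : ((∑ i ∈ s, mulA W S (actA W S (x i) a) (actA W S (y i) b)
      : ↥(W.coinvariants rhoB)) : B)
      = ∑ i ∈ s, ((actA W S (x i) a : B) * (actA W S (y i) b : B)) := by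
    rw [AddSubmonoidClass.coe_finset_sum]
    rfl
  rw [coesum]
  have hR : ∑ i ∈ s, ((actA W S (x i) a : B) * (actA W S (y i) b : B))
      = cmul W (cmul W (mulRight k (↑a : B) ∘ₗ v.toLinearMap) (wm W v))
          (cmul W (mulRight k (↑b : B) ∘ₗ v.toLinearMap) (wm W v)) h := by
    rw [cmul_apply_rep W _ _ hrep]
    exact Finset.sum_congr rfl fun i _ => by rw [actA_conv W S, actA_conv W S]
  rw [hR]
  have step : cmul W (cmul W (mulRight k (↑a : B) ∘ₗ v.toLinearMap) (wm W v))
        (cmul W (mulRight k (↑b : B) ∘ₗ v.toLinearMap) (wm W v))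
      = cmul W (mulRight k ((↑a : B) * (↑b : B)) ∘ₗ v.toLinearMap) (wm W v) := by
    rw [cmul_assoc]
    have e1 : cmul W (wm W v) (cmul W (mulRight k (↑b : B) ∘ₗ v.toLinearMap) (wm W v))
        = cmul W (cmul W (wm W v) (mulRight k (↑b : B) ∘ₗ v.toLinearMap)) (wm W v) :=
      (cmul_assoc W _ _ _).symm
    have e2 : cmul W (wm W v) (mulRight k (↑b : B) ∘ₗ v.toLinearMap)
        = toSpanSingleton k B (↑b : B) ∘ₗ W.counit := by
      rw [cmul_mulRight, cmul_wv W S, cone_mulRight]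
    rw [e1, e2, cmul_smul_left]
    rw [cmul_mulLeft_snd]
    congr 1
    rw [LinearMap.mulRight_mul, LinearMap.comp_assoc]
  rw [step, mulA_coe]

theorem act_eps_t (h : H) : actA W S h (oneA W S) = actA W S (W.εt h) (oneA W S) := by
  apply Subtype.ext
  rw [actA_coe, actA_coe, oneA_coe, mul_one, mul_one, Emap_v W S, Emap_v W S, counit_eps_t]

theorem act_one_eps (z : H) : actA W S z (oneA W S) = W.counit z • oneA W S := by
  apply Subtype.ext
  rw [actA_coe, oneA_coe, mul_one, Emap_v W S]
  rfl

/-- the left coaction of `A`. -/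
noncomputable def coactA : ↥(W.coinvariants rhoB) →ₗ[k] H ⊗[k] ↥(W.coinvariants rhoB) :=
  lTensor H (EA W S) ∘ₗ lamB ∘ₗ (W.coinvariants rhoB).subtype

theorem subtype_comp_EA : (W.coinvariants rhoB).subtype ∘ₗ EA W S = W.Emap rhoB v :=
  LinearMap.subtype_comp_codRestrict _ _ _

theorem coact_compat : (lTensor H (W.coinvariants rhoB).subtype) ∘ₗ coactA W S
    = lamB ∘ₗ (W.coinvariants rhoB).subtype := by
  refine LinearMap.ext fun a => ?_
  have hc : coactA W S a = (lTensor H (EA W S)) (lamB ↑a) := rfl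
  have e : (lTensor H (W.coinvariants rhoB).subtype) ∘ₗ (lTensor H (EA W S))
      = lTensor H (W.Emap rhoB v) := by
    rw [← lTensor_comp, subtype_comp_EA W S]
  have e' := DFunLike.congr_fun e (lamB ↑a)
  simp only [coe_comp, Function.comp_apply] at e'
  simp only [coe_comp, Function.comp_apply, Submodule.subtype_apply]
  rw [hc, e']
  exact lam_Emap W S ↑a (coe_rho W S a)

theorem coact_compat_pt (a : ↥(W.coinvariants rhoB)) :
    (lTensor H (W.coinvariants rhoB).subtype) (coactA W S a) = lamB ↑a :=
  DFunLike.congr_fun (coact_compat W S) a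

theorem coact_coassoc : (lTensor H (coactA W S)) ∘ₗ coactA W S
    = (TensorProduct.assoc k H H ↥(W.coinvariants rhoB)).toLinearMap ∘ₗ
        (rTensor ↥(W.coinvariants rhoB) W.comul) ∘ₗ coactA W S := by
  refine LinearMap.ext fun a => ?_
  have hc : coactA W S a = (lTensor H (EA W S)) (lamB ↑a) := rfl
  have e1 : (lTensor H (coactA W S)) ∘ₗ (lTensor H (EA W S))
      = lTensor H ((lTensor H (EA W S)) ∘ₗ lamB) ∘ₗ (lTensor H (W.Emap rhoB v)) := by
    rw [← lTensor_comp, ← lTensor_comp]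
    rfl
  have e4 : (lTensor H (lTensor H (EA W S))) ∘ₗ (TensorProduct.assoc k H H B).toLinearMap
      = (TensorProduct.assoc k H H ↥(W.coinvariants rhoB)).toLinearMap
          ∘ₗ lTensor (H ⊗[k] H) (EA W S) :=
    TensorProduct.ext_threefold fun x y z => by simp
  have e5 : lTensor (H ⊗[k] H) (EA W S) ∘ₗ rTensor B W.comul
      = rTensor ↥(W.coinvariants rhoB) W.comul ∘ₗ lTensor H (EA W S) :=
    TensorProduct.ext' fun x y => by simp
  simp only [coe_comp, Function.comp_apply, LinearEquiv.coe_coe]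
  rw [hc]
  have e1' := DFunLike.congr_fun e1 (lamB ↑a)
  simp only [coe_comp, Function.comp_apply] at e1'
  rw [e1', lam_Emap W S ↑a (coe_rho W S a)]
  have e2' := DFunLike.congr_fun (lTensor_comp H (lTensor H (EA W S)) lamB) (lamB ↑a)
  simp only [coe_comp, Function.comp_apply] at e2'
  rw [e2', S.lcoassoc ↑a]
  have e4' := DFunLike.congr_fun e4 ((rTensor B W.comul) (lamB ↑a))
  simp only [coe_comp, Function.comp_apply, LinearEquiv.coe_coe] at e4'
  rw [e4']
  have e5' := DFunLike.congr_fun e5 (lamB ↑a)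
  simp only [coe_comp, Function.comp_apply] at e5'
  rw [e5']

theorem coact_counit : (TensorProduct.lid k ↥(W.coinvariants rhoB)).toLinearMap ∘ₗ
    (rTensor ↥(W.coinvariants rhoB) W.counit) ∘ₗ coactA W S = LinearMap.id := by
  refine LinearMap.ext fun a => ?_
  have hc : coactA W S a = (lTensor H (EA W S)) (lamB ↑a) := rfl
  have e1 : (rTensor ↥(W.coinvariants rhoB) W.counit) ∘ₗ lTensor H (EA W S)
      = lTensor k (EA W S) ∘ₗ rTensor B W.counit :=
    TensorProduct.ext' fun x y => by simp
  have e2 : (TensorProduct.lid k ↥(W.coinvariants rhoB)).toLinearMap ∘ₗ lTensor k (EA W S)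
      = EA W S ∘ₗ (TensorProduct.lid k B).toLinearMap :=
    TensorProduct.ext' fun c y => by simp
  simp only [coe_comp, Function.comp_apply, id_coe, id_eq, LinearEquiv.coe_coe]
  rw [hc]
  have e1' := DFunLike.congr_fun e1 (lamB ↑a)
  simp only [coe_comp, Function.comp_apply] at e1'
  rw [e1']
  have e2' := DFunLike.congr_fun e2 ((rTensor B W.counit) (lamB ↑a))
  simp only [coe_comp, Function.comp_apply, LinearEquiv.coe_coe] at e2'
  rw [e2', S.lcounit ↑a]
  exact EA_of_mem W S a

theorem coact_mul {ι ι' : Type*} {s : Finset ι} {s' : Finset ι'} (a b : ↥(W.coinvariants rhoB))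
    (a1 : ι → H) (a0 : ι → ↥(W.coinvariants rhoB)) (b1 : ι' → H)
    (b0 : ι' → ↥(W.coinvariants rhoB))
    (h1 : coactA W S a = ∑ i ∈ s, a1 i ⊗ₜ[k] a0 i)
    (h2 : coactA W S b = ∑ j ∈ s', b1 j ⊗ₜ[k] b0 j) :
    coactA W S (mulA W S a b) = ∑ i ∈ s, ∑ j ∈ s',
      (a1 i * b1 j) ⊗ₜ[k] mulA W S (a0 i) (b0 j) := by
  have la : lamB ↑a = ∑ i ∈ s, a1 i ⊗ₜ[k] (↑(a0 i) : B) := by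
    rw [← coact_compat_pt W S a, h1]
    simp [map_sum]
  have lb : lamB ↑b = ∑ j ∈ s', b1 j ⊗ₜ[k] (↑(b0 j) : B) := by
    rw [← coact_compat_pt W S b, h2]
    simp [map_sum]
  have lab : lamB ((↑a : B) * ↑b) = ∑ i ∈ s, ∑ j ∈ s',
      (a1 i * b1 j) ⊗ₜ[k] ((↑(a0 i) : B) * ↑(b0 j)) := by
    rw [S.lmul, la, lb, Finset.sum_mul_sum]
    exact Finset.sum_congr rfl fun i _ => Finset.sum_congr rfl fun j _ => by
      rw [Algebra.TensorProduct.tmul_mul_tmul]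
  show (lTensor H (EA W S)) (lamB ↑(mulA W S a b)) = _
  rw [mulA_coe, lab]
  simp only [map_sum, lTensor_tmul]
  refine Finset.sum_congr rfl fun i _ => Finset.sum_congr rfl fun j _ => ?_
  congr 1
  exact EA_of_mem W S (mulA W S (a0 i) (b0 j))

theorem coact_one : coactA W S (oneA W S)
    = (rTensor ↥(W.coinvariants rhoB) W.εs) (coactA W S (oneA W S)) := by
  have h1 : coactA W S (oneA W S) = (1 : H) ⊗ₜ[k] oneA W S := by
    show (lTensor H (EA W S)) (lamB ↑(oneA W S)) = _
    rw [oneA_coe, S.lone, Algebra.TensorProduct.one_def]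
    simp only [lTensor_tmul]
    congr 1
    exact EA_of_mem W S (oneA W S)
  rw [h1]
  simp [eps_s_one W]

end WHAux

namespace WHAux

set_option maxHeartbeats 1000000
set_option synthInstance.maxHeartbeats 1000000
set_option linter.unusedSectionVars false

variable {k H : Type*} [CommRing k] [Ring H] [Algebra k H] (W : WeakHopfAlgebra k H)
variable {B : Type*} [Ring B] [Algebra k B]
variable {lamB : B →ₗ[k] H ⊗[k] B} {rhoB : B →ₗ[k] B ⊗[k] H} {v : H →ₐ[k] B}
variable (S : Setup W lamB rhoB v)

abbrev coinvACG : AddCommGroup ↥(W.coinvariants rhoB) := Submodule.addCommGroup _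

attribute [local instance] coinvACG

/-- `φ₀(a ⊗ h) = a v(h)`. -/
noncomputable def phi0 : (↥(W.coinvariants rhoB)) ⊗[k] H →ₗ[k] B :=
  LinearMap.mul' k B ∘ₗ TensorProduct.map (W.coinvariants rhoB).subtype v.toLinearMap

theorem phi0_tmul (a : ↥(W.coinvariants rhoB)) (h : H) :
    phi0 W (v := v) (a ⊗ₜ[k] h) = (↑a : B) * v h := by
  simp [phi0]

include S

theorem mulA_oneA (a : ↥(W.coinvariants rhoB)) : mulA W S a (oneA W S) = a :=
  Subtype.ext (by rw [mulA_coe, oneA_coe, mul_one])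

theorem rel_le_ker :
    W.smashRel (mulA W S) (oneA W S) (actA W S) ≤ ker (phi0 W (v := v)) := by
  rw [WeakHopfAlgebra.smashRel, Submodule.span_le]
  rintro x ⟨a, h, z, ⟨u, hu⟩, rfl⟩
  subst hu
  simp only [SetLike.mem_coe, LinearMap.mem_ker, map_sub]
  have h1 : (mulA W S a (actA W S (W.εt u) (oneA W S))) ⊗ₜ[k] h
      = W.counit (W.εt u) • (a ⊗ₜ[k] h) := by
    rw [act_one_eps W S, map_smul, mulA_oneA W S a, TensorProduct.smul_tmul']
  rw [h1, map_smul, phi0_tmul, phi0_tmul, counit_eps_t, map_mul, v_eps_t W S,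
    ← Algebra.smul_def, mul_smul_comm, sub_self]

/-- `φ` on the quotient. -/
noncomputable def phiQ : ((↥(W.coinvariants rhoB)) ⊗[k] H
    ⧸ W.smashRel (mulA W S) (oneA W S) (actA W S)) →ₗ[k] B :=
  (W.smashRel (mulA W S) (oneA W S) (actA W S)).liftQ (phi0 W (v := v)) (rel_le_ker W S)

theorem phiQ_mk (x : (↥(W.coinvariants rhoB)) ⊗[k] H) :
    phiQ W S ((W.smashRel (mulA W S) (oneA W S) (actA W S)).mkQ x) = phi0 W (v := v) x := rfl

/-- `ψ₀(b) = [E(b₍₀₎) ⊗ b₍₁₎]`. -/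
noncomputable def psi0 : B →ₗ[k] ((↥(W.coinvariants rhoB)) ⊗[k] H
    ⧸ W.smashRel (mulA W S) (oneA W S) (actA W S)) :=
  (W.smashRel (mulA W S) (oneA W S) (actA W S)).mkQ ∘ₗ rTensor H (EA W S) ∘ₗ rhoB

theorem EA_mul_v (a : ↥(W.coinvariants rhoB)) (h : H) :
    EA W S ((↑a : B) * v h) = W.counit h • a :=
  Subtype.ext (by rw [EA_coe, Emap_mul_v W S _ _ (coe_rho W S a)]; rfl)

theorem psi0_mul_v (a : ↥(W.coinvariants rhoB)) (h : H) :
    psi0 W S ((↑a : B) * v h)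
      = (W.smashRel (mulA W S) (oneA W S) (actA W S)).mkQ (a ⊗ₜ[k] h) := by
  obtain ⟨s, hs⟩ := TensorProduct.exists_finset (W.comul h)
  have h1 : rhoB ((↑a : B) * v h) = ∑ i ∈ s, ((↑a : B) * v i.1) ⊗ₜ[k] i.2 := by
    rw [S.rmul, coe_rho W S a, S.vrho, hs]
    simp only [map_sum, rTensor_tmul, Finset.mul_sum]
    refine Finset.sum_congr rfl fun i _ => ?_
    rw [Algebra.TensorProduct.tmul_mul_tmul, one_mul]
    rfl
  simp only [psi0, coe_comp, Function.comp_apply]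
  rw [h1]
  simp only [map_sum, rTensor_tmul]
  calc ∑ i ∈ s, (W.smashRel (mulA W S) (oneA W S) (actA W S)).mkQ
        ((EA W S ((↑a : B) * v i.1)) ⊗ₜ[k] i.2)
      = (W.smashRel (mulA W S) (oneA W S) (actA W S)).mkQ
          (a ⊗ₜ[k] (∑ i ∈ s, W.counit i.1 • i.2)) := by
        rw [TensorProduct.tmul_sum, map_sum]
        refine Finset.sum_congr rfl fun i _ => ?_
        rw [EA_mul_v W S, TensorProduct.smul_tmul]
    _ = _ := by rw [sum_eps_first W hs]

theorem phi_psi : phiQ W S ∘ₗ psi0 W S = LinearMap.id := by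
  refine LinearMap.ext fun b => ?_
  obtain ⟨s, hs⟩ := TensorProduct.exists_finset (rhoB b)
  have e0 : phiQ W S (psi0 W S b)
      = LinearMap.mul' k B ((TensorProduct.map (W.Emap rhoB v) v.toLinearMap) (rhoB b)) := by
    simp only [psi0, coe_comp, Function.comp_apply, phiQ_mk]
    rw [hs]
    simp only [map_sum, rTensor_tmul, TensorProduct.map_tmul]
    simp only [phi0, coe_comp, Function.comp_apply, TensorProduct.map_tmul, mul'_apply]
    rfl
  have e1 : TensorProduct.map (W.Emap rhoB v) v.toLinearMap
      = (TensorProduct.map (LinearMap.mul' k B ∘ₗ lTensor B (wm W v)) v.toLinearMap)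
          ∘ₗ rTensor H rhoB :=
    TensorProduct.ext' fun c y => by simp [Emap_apply]
  have e2 : (rTensor H rhoB) (rhoB b)
      = (TensorProduct.assoc k B H H).symm ((lTensor B W.comul) (rhoB b)) := by
    rw [← S.rcoassoc b]; simp
  have e3 : (LinearMap.mul' k B ∘ₗ TensorProduct.map
        (LinearMap.mul' k B ∘ₗ lTensor B (wm W v)) v.toLinearMap)
        ∘ₗ (TensorProduct.assoc k B H H).symm.toLinearMap
      = LinearMap.mul' k B ∘ₗ lTensor B (LinearMap.mul' k B
          ∘ₗ TensorProduct.map (wm W v) v.toLinearMap) :=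
    ext3r fun c x y => by simp [mul_assoc]
  calc phiQ W S (psi0 W S b)
      = LinearMap.mul' k B ((TensorProduct.map (W.Emap rhoB v) v.toLinearMap) (rhoB b)) := e0
    _ = LinearMap.mul' k B ((TensorProduct.map (LinearMap.mul' k B ∘ₗ lTensor B (wm W v))
          v.toLinearMap) ((rTensor H rhoB) (rhoB b))) := by
        rw [e1]; simp only [coe_comp, Function.comp_apply]
    _ = LinearMap.mul' k B ((TensorProduct.map (LinearMap.mul' k B ∘ₗ lTensor B (wm W v))
          v.toLinearMap) ((TensorProduct.assoc k B H H).symm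
            ((lTensor B W.comul) (rhoB b)))) := by rw [e2]
    _ = LinearMap.mul' k B ((lTensor B (LinearMap.mul' k B
          ∘ₗ TensorProduct.map (wm W v) v.toLinearMap)) ((lTensor B W.comul) (rhoB b))) := by
        have h3 := DFunLike.congr_fun e3 ((lTensor B W.comul) (rhoB b))
        simp only [coe_comp, Function.comp_apply, LinearEquiv.coe_coe] at h3
        rw [h3]
    _ = LinearMap.mul' k B ((lTensor B (cmul W (wm W v) v.toLinearMap)) (rhoB b)) := by
        have h4 := DFunLike.congr_fun (lTensor_comp B (LinearMap.mul' k B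
          ∘ₗ TensorProduct.map (wm W v) v.toLinearMap) W.comul) (rhoB b)
        simp only [coe_comp, Function.comp_apply] at h4
        rw [← h4]
        rfl
    _ = LinearMap.mul' k B ((lTensor B (cone W : H →ₗ[k] B)) (rhoB b)) := by
        rw [cmul_wv W S]
    _ = b := by
        have hr := S.rcounit b
        rw [hs] at hr
        simp only [map_sum, lTensor_tmul, TensorProduct.rid_tmul] at hr
        rw [hs]
        simp only [map_sum, lTensor_tmul, mul'_apply, cone_apply]
        calc ∑ i ∈ s, i.1 * (W.counit i.2 • (1 : B))
            = ∑ i ∈ s, W.counit i.2 • i.1 := by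
              refine Finset.sum_congr rfl fun i _ => ?_
              rw [mul_smul_comm, mul_one]
          _ = b := hr

theorem phi_psi_pt (b : B) : phiQ W S (psi0 W S b) = b :=
  DFunLike.congr_fun (phi_psi W S) b

theorem psi_phi : psi0 W S ∘ₗ phiQ W S = LinearMap.id := by
  refine Submodule.linearMap_qext _ ?_
  refine TensorProduct.ext' fun a h => ?_
  simp only [coe_comp, Function.comp_apply, id_coe, id_eq]
  rw [phiQ_mk, phi0_tmul, psi0_mul_v W S]

theorem psi_phi_pt (q : (↥(W.coinvariants rhoB)) ⊗[k] H
    ⧸ W.smashRel (mulA W S) (oneA W S) (actA W S)) : psi0 W S (phiQ W S q) = q :=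
  DFunLike.congr_fun (psi_phi W S) q

theorem phiQ_bij : Function.Bijective (phiQ W S) :=
  Function.bijective_iff_has_inverse.2 ⟨psi0 W S, psi_phi_pt W S, phi_psi_pt W S⟩

/-- multiplication on the smash product, transported from `B`. -/
noncomputable def mQ : ((↥(W.coinvariants rhoB)) ⊗[k] H
      ⧸ W.smashRel (mulA W S) (oneA W S) (actA W S))
    →ₗ[k] ((↥(W.coinvariants rhoB)) ⊗[k] H
      ⧸ W.smashRel (mulA W S) (oneA W S) (actA W S))
    →ₗ[k] ((↥(W.coinvariants rhoB)) ⊗[k] H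
      ⧸ W.smashRel (mulA W S) (oneA W S) (actA W S)) :=
  LinearMap.mk₂ k (fun x y => psi0 W S (phiQ W S x * phiQ W S y))
    (fun x x' y => by rw [map_add, add_mul, map_add])
    (fun c x y => by rw [map_smul, smul_mul_assoc, map_smul])
    (fun x y y' => by rw [map_add, mul_add, map_add])
    (fun c x y => by rw [map_smul, mul_smul_comm, map_smul])

theorem mQ_apply (x y) : mQ W S x y = psi0 W S (phiQ W S x * phiQ W S y) := rfl

theorem phiQ_mul (x y) : phiQ W S (mQ W S x y) = phiQ W S x * phiQ W S y := by
  rw [mQ_apply, phi_psi_pt W S]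

noncomputable def rhoQ : ((↥(W.coinvariants rhoB)) ⊗[k] H
      ⧸ W.smashRel (mulA W S) (oneA W S) (actA W S))
    →ₗ[k] ((↥(W.coinvariants rhoB)) ⊗[k] H
      ⧸ W.smashRel (mulA W S) (oneA W S) (actA W S)) ⊗[k] H :=
  rTensor H (psi0 W S) ∘ₗ rhoB ∘ₗ phiQ W S

noncomputable def lamQ : ((↥(W.coinvariants rhoB)) ⊗[k] H
      ⧸ W.smashRel (mulA W S) (oneA W S) (actA W S))
    →ₗ[k] H ⊗[k] ((↥(W.coinvariants rhoB)) ⊗[k] H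
      ⧸ W.smashRel (mulA W S) (oneA W S) (actA W S)) :=
  lTensor H (psi0 W S) ∘ₗ lamB ∘ₗ phiQ W S

theorem rho_phiQ (q) : rhoB (phiQ W S q) = (rTensor H (phiQ W S)) (rhoQ W S q) := by
  simp only [rhoQ, coe_comp, Function.comp_apply]
  have e := DFunLike.congr_fun (rTensor_comp H (phiQ W S) (psi0 W S)) (rhoB (phiQ W S q))
  simp only [coe_comp, Function.comp_apply] at e
  rw [← e, phi_psi W S, rTensor_id]
  rfl

theorem lam_phiQ (q) : lamB (phiQ W S q) = (lTensor H (phiQ W S)) (lamQ W S q) := by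
  simp only [lamQ, coe_comp, Function.comp_apply]
  have e := DFunLike.congr_fun (lTensor_comp H (phiQ W S) (psi0 W S)) (lamB (phiQ W S q))
  simp only [coe_comp, Function.comp_apply] at e
  rw [← e, phi_psi W S, lTensor_id]
  rfl

end WHAux

namespace WHAux

set_option maxHeartbeats 1000000
set_option synthInstance.maxHeartbeats 1000000
set_option linter.unusedSectionVars false

variable {k H : Type*} [CommRing k] [Ring H] [Algebra k H] (W : WeakHopfAlgebra k H)
variable {B : Type*} [Ring B] [Algebra k B]
variable {lamB : B →ₗ[k] H ⊗[k] B} {rhoB : B →ₗ[k] B ⊗[k] H} {v : H →ₐ[k] B}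
variable (S : Setup W lamB rhoB v)
include S

attribute [local instance] coinvACG

theorem rho_mul_v (a : ↥(W.coinvariants rhoB)) (h : H) {ι : Type*} {s : Finset ι} {x y : ι → H}
    (hrep : W.comul h = ∑ i ∈ s, x i ⊗ₜ[k] y i) :
    rhoB ((↑a : B) * v h) = ∑ i ∈ s, ((↑a : B) * v (x i)) ⊗ₜ[k] y i := by
  rw [S.rmul, coe_rho W S a, S.vrho, hrep]
  simp only [map_sum, rTensor_tmul, Finset.mul_sum]
  refine Finset.sum_congr rfl fun i _ => ?_
  rw [Algebra.TensorProduct.tmul_mul_tmul, one_mul]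
  rfl

theorem mQ_formula (a a' : ↥(W.coinvariants rhoB)) (h h' : H)
    {ι : Type*} {s : Finset ι} {x y : ι → H}
    (hrep : W.comul h = ∑ i ∈ s, x i ⊗ₜ[k] y i) :
    mQ W S ((W.smashRel (mulA W S) (oneA W S) (actA W S)).mkQ (a ⊗ₜ[k] h))
        ((W.smashRel (mulA W S) (oneA W S) (actA W S)).mkQ (a' ⊗ₜ[k] h'))
      = (W.smashRel (mulA W S) (oneA W S) (actA W S)).mkQ
          (∑ i ∈ s, mulA W S a (actA W S (x i) a') ⊗ₜ[k] (y i * h')) := by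
  apply (phiQ_bij W S).injective
  rw [phiQ_mul, phiQ_mk, phiQ_mk, phiQ_mk, phi0_tmul, phi0_tmul, map_sum]
  have key : ∑ i ∈ s, ((actA W S (x i) a' : B) * v (y i)) = v h * (↑a' : B) := by
    have e : cmul W (cmul W (mulRight k (↑a' : B) ∘ₗ v.toLinearMap) (wm W v)) v.toLinearMap
        = mulRight k (↑a' : B) ∘ₗ v.toLinearMap := by
      rw [cmul_assoc, cmul_wv W S, cmul_cone_right]
    have e2 := DFunLike.congr_fun e h
    rw [cmul_apply_rep W _ _ hrep] at e2
    simp only [coe_comp, Function.comp_apply, AlgHom.toLinearMap_apply, mulRight_apply] at e2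
    rw [← e2]
    refine Finset.sum_congr rfl fun i _ => ?_
    rw [actA_conv W S]
  calc (↑a : B) * v h * ((↑a' : B) * v h')
      = (↑a : B) * ((∑ i ∈ s, ((actA W S (x i) a' : B) * v (y i))) * v h') := by
        rw [key, mul_assoc, mul_assoc]
    _ = ∑ i ∈ s, phi0 W (v := v) (mulA W S a (actA W S (x i) a') ⊗ₜ[k] (y i * h')) := by
        rw [Finset.sum_mul, Finset.mul_sum]
        refine Finset.sum_congr rfl fun i _ => ?_
        rw [phi0_tmul, mulA_coe, map_mul]
        simp only [mul_assoc]

theorem rhoQ_formula (a : ↥(W.coinvariants rhoB)) (h : H)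
    {ι : Type*} {s : Finset ι} {x y : ι → H}
    (hrep : W.comul h = ∑ i ∈ s, x i ⊗ₜ[k] y i) :
    rhoQ W S ((W.smashRel (mulA W S) (oneA W S) (actA W S)).mkQ (a ⊗ₜ[k] h))
      = ∑ i ∈ s, ((W.smashRel (mulA W S) (oneA W S) (actA W S)).mkQ (a ⊗ₜ[k] x i)) ⊗ₜ[k] y i := by
  simp only [rhoQ, coe_comp, Function.comp_apply]
  rw [phiQ_mk, phi0_tmul, rho_mul_v W S a h hrep]
  simp only [map_sum, rTensor_tmul]
  exact Finset.sum_congr rfl fun i _ => by rw [psi0_mul_v W S]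

theorem lamQ_formula (a : ↥(W.coinvariants rhoB)) (h : H)
    {ι ι' : Type*} {s : Finset ι} {s' : Finset ι'} {a1 : ι → H}
    {a0 : ι → ↥(W.coinvariants rhoB)} {h1 h2 : ι' → H}
    (hca : coactA W S a = ∑ i ∈ s, a1 i ⊗ₜ[k] a0 i)
    (hch : W.comul h = ∑ j ∈ s', h1 j ⊗ₜ[k] h2 j) :
    lamQ W S ((W.smashRel (mulA W S) (oneA W S) (actA W S)).mkQ (a ⊗ₜ[k] h))
      = ∑ i ∈ s, ∑ j ∈ s', (a1 i * h1 j) ⊗ₜ[k]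
          ((W.smashRel (mulA W S) (oneA W S) (actA W S)).mkQ (a0 i ⊗ₜ[k] h2 j)) := by
  simp only [lamQ, coe_comp, Function.comp_apply]
  rw [phiQ_mk, phi0_tmul, S.lmul]
  have la : lamB ↑a = ∑ i ∈ s, a1 i ⊗ₜ[k] (↑(a0 i) : B) := by
    rw [← coact_compat_pt W S a, hca]
    simp [map_sum]
  have lv : lamB (v h) = ∑ j ∈ s', h1 j ⊗ₜ[k] v (h2 j) := by
    rw [S.vlam, hch]
    simp only [map_sum, lTensor_tmul]
    rfl
  rw [la, lv, Finset.sum_mul_sum]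
  simp only [map_sum, Algebra.TensorProduct.tmul_mul_tmul, lTensor_tmul]
  exact Finset.sum_congr rfl fun i _ => Finset.sum_congr rfl fun j _ => by
    rw [psi0_mul_v W S]

theorem phiQ_one :
    phiQ W S ((W.smashRel (mulA W S) (oneA W S) (actA W S)).mkQ ((oneA W S) ⊗ₜ[k] (1 : H)))
      = 1 := by
  rw [phiQ_mk, phi0_tmul, oneA_coe, map_one, one_mul]

theorem mQ_assoc (x y z) : mQ W S (mQ W S x y) z = mQ W S x (mQ W S y z) := by
  rw [mQ_apply, mQ_apply, mQ_apply, mQ_apply, phi_psi_pt W S, phi_psi_pt W S, mul_assoc]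

theorem mQ_one_left (x) :
    mQ W S ((W.smashRel (mulA W S) (oneA W S) (actA W S)).mkQ ((oneA W S) ⊗ₜ[k] (1 : H))) x
      = x := by
  rw [mQ_apply, phiQ_one W S, one_mul, psi_phi_pt W S]

theorem mQ_one_right (x) :
    mQ W S x ((W.smashRel (mulA W S) (oneA W S) (actA W S)).mkQ ((oneA W S) ⊗ₜ[k] (1 : H)))
      = x := by
  rw [mQ_apply, phiQ_one W S, mul_one, psi_phi_pt W S]

end WHAux

open WeakHopfAlgebra in
/-- Structure theorem for weak Hopf bicomodule algebras: if `H` is a weak Hopf algebra with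
bijective antipode, `B` an `H`-bicomodule algebra and `v : H → B` a morphism of `H`-bicomodule
algebras, then `A = B^{co(H)}` (with action `h▷a = E(v(h)a)`, multiplication and left coaction
restricted from `B`) is a left `H`-module algebra and a left `H`-comodule algebra, and
`φ : A # H → B, φ(a # h) = a v(h)` is an isomorphism of `H`-bicomodule algebras. -/
theorem weakHopf_structure_theorem_bicomodule_algebras
    {k H : Type*} [CommRing k] [Ring H] [Algebra k H]
    (W : WeakHopfAlgebra k H) (hS : Function.Bijective W.antipode)
    {B : Type*} [Ring B] [Algebra k B]
    (lamB : B →ₗ[k] H ⊗[k] B) (rhoB : B →ₗ[k] B ⊗[k] H)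
    (hrho_mul : ∀ b b' : B, rhoB (b * b') = rhoB b * rhoB b')
    (hrho_one : rhoB 1 = 1)
    (hrho_counit : ∀ b, (TensorProduct.rid k B) ((LinearMap.lTensor B W.counit) (rhoB b)) = b)
    (hrho_coassoc : ∀ b, (TensorProduct.assoc k B H H) ((LinearMap.rTensor H rhoB) (rhoB b))
      = (LinearMap.lTensor B W.comul) (rhoB b))
    (hrho_weak : ∀ b : B, rhoB 1 * (b ⊗ₜ[k] (1 : H)) = (LinearMap.lTensor B W.εt) (rhoB b))
    (hlam_mul : ∀ b b' : B, lamB (b * b') = lamB b * lamB b')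
    (hlam_one : lamB 1 = 1)
    (hlam_counit : ∀ b, (TensorProduct.lid k B) ((LinearMap.rTensor B W.counit) (lamB b)) = b)
    (hlam_coassoc : ∀ b, (LinearMap.lTensor H lamB) (lamB b)
      = (TensorProduct.assoc k H H B) ((LinearMap.rTensor B W.comul) (lamB b)))
    (hlam_weak : ∀ b : B, ((1 : H) ⊗ₜ[k] b) * lamB 1 = (LinearMap.rTensor B W.εs) (lamB b))
    (hbicomod : ∀ b, (TensorProduct.assoc k H B H) ((LinearMap.rTensor H lamB) (rhoB b))
      = (LinearMap.lTensor H rhoB) (lamB b))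
    (v : H →ₐ[k] B)
    (hv_rho : ∀ h, rhoB (v h) = (LinearMap.rTensor H v.toLinearMap) (W.comul h))
    (hv_lam : ∀ h, lamB (v h) = (LinearMap.lTensor H v.toLinearMap) (W.comul h)) :
    letI A : Submodule k B := W.coinvariants rhoB
    ∃ (actA : H →ₗ[k] A →ₗ[k] A) (mulA : A →ₗ[k] A →ₗ[k] A) (oneA : A)
      (coactA : A →ₗ[k] H ⊗[k] A),
      -- the structure maps of `A` are the restrictions from `B` (the action being `h▷a = E(v(h)a)`):
      (∀ (h : H) (a : A), (actA h a : B) = W.Emap rhoB v (v h * (a : B))) ∧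
      (∀ a b : A, (mulA a b : B) = (a : B) * (b : B)) ∧
      ((oneA : B) = 1) ∧
      ((LinearMap.lTensor H A.subtype) ∘ₗ coactA = lamB ∘ₗ A.subtype) ∧
      -- `A` is a left `H`-module algebra:
      (∀ (h h' : H) (a : A), actA (h * h') a = actA h (actA h' a)) ∧
      (∀ a : A, actA 1 a = a) ∧
      (∀ (h : H) (a b : A) (n : ℕ) (h1 h2 : Fin n → H),
        W.comul h = ∑ i, h1 i ⊗ₜ[k] h2 i →
        actA h (mulA a b) = ∑ i, mulA (actA (h1 i) a) (actA (h2 i) b)) ∧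
      (∀ h : H, actA h oneA = actA (W.εt h) oneA) ∧
      -- `A` is a left `H`-comodule algebra:
      ((LinearMap.lTensor H coactA) ∘ₗ coactA
        = (TensorProduct.assoc k H H A).toLinearMap ∘ₗ
            (LinearMap.rTensor (↥A) W.comul) ∘ₗ coactA) ∧
      ((TensorProduct.lid k A).toLinearMap ∘ₗ (LinearMap.rTensor (↥A) W.counit) ∘ₗ coactA
        = LinearMap.id) ∧
      (∀ (a b : A) (N N' : ℕ) (a1 : Fin N → H) (a0 : Fin N → A)
          (b1 : Fin N' → H) (b0 : Fin N' → A),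
        coactA a = ∑ i, a1 i ⊗ₜ[k] a0 i → coactA b = ∑ j, b1 j ⊗ₜ[k] b0 j →
        coactA (mulA a b) = ∑ i, ∑ j, (a1 i * b1 j) ⊗ₜ[k] mulA (a0 i) (b0 j)) ∧
      (coactA oneA = (LinearMap.rTensor (↥A) W.εs) (coactA oneA)) ∧
      -- the smash product `A # H` and the isomorphism `φ(a # h) = a v(h)`:
      (letI rel := W.smashRel mulA oneA actA
       letI : AddCommGroup A := Submodule.addCommGroup A
       ∃ (m : ((A ⊗[k] H) ⧸ rel) →ₗ[k] ((A ⊗[k] H) ⧸ rel) →ₗ[k] ((A ⊗[k] H) ⧸ rel))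
         (rhoQ : ((A ⊗[k] H) ⧸ rel) →ₗ[k] ((A ⊗[k] H) ⧸ rel) ⊗[k] H)
         (lamQ : ((A ⊗[k] H) ⧸ rel) →ₗ[k] H ⊗[k] ((A ⊗[k] H) ⧸ rel))
         (φ : ((A ⊗[k] H) ⧸ rel) →ₗ[k] B),
        -- the smash product multiplication, coactions and `φ`:
        (∀ (a a' : A) (h h' : H) (n : ℕ) (h1 h2 : Fin n → H),
          W.comul h = ∑ i, h1 i ⊗ₜ[k] h2 i →
          m (rel.mkQ (a ⊗ₜ[k] h)) (rel.mkQ (a' ⊗ₜ[k] h'))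
            = rel.mkQ (∑ i, mulA a (actA (h1 i) a') ⊗ₜ[k] (h2 i * h'))) ∧
        (∀ x y z, m (m x y) z = m x (m y z)) ∧
        (∀ x, m (rel.mkQ (oneA ⊗ₜ[k] (1 : H))) x = x) ∧
        (∀ x, m x (rel.mkQ (oneA ⊗ₜ[k] (1 : H))) = x) ∧
        (∀ (a : A) (h : H) (n : ℕ) (h1 h2 : Fin n → H),
          W.comul h = ∑ i, h1 i ⊗ₜ[k] h2 i →
          rhoQ (rel.mkQ (a ⊗ₜ[k] h)) = ∑ i, rel.mkQ (a ⊗ₜ[k] h1 i) ⊗ₜ[k] h2 i) ∧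
        (∀ (a : A) (h : H) (N n : ℕ) (a1 : Fin N → H) (a0 : Fin N → A) (h1 h2 : Fin n → H),
          coactA a = ∑ i, a1 i ⊗ₜ[k] a0 i → W.comul h = ∑ j, h1 j ⊗ₜ[k] h2 j →
          lamQ (rel.mkQ (a ⊗ₜ[k] h))
            = ∑ i, ∑ j, (a1 i * h1 j) ⊗ₜ[k] rel.mkQ (a0 i ⊗ₜ[k] h2 j)) ∧
        (∀ (a : A) (h : H), φ (rel.mkQ (a ⊗ₜ[k] h)) = (a : B) * v h) ∧
        -- `φ` is an isomorphism of `H`-bicomodule algebras: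
        Function.Bijective φ ∧
        (∀ x y, φ (m x y) = φ x * φ y) ∧
        (φ (rel.mkQ (oneA ⊗ₜ[k] (1 : H))) = 1) ∧
        (∀ q, rhoB (φ q) = (LinearMap.rTensor H φ) (rhoQ q)) ∧
        (∀ q, lamB (φ q) = (LinearMap.lTensor H φ) (lamQ q))) := by
  letI S : WHAux.Setup W lamB rhoB v :=
    ⟨hrho_mul, hrho_one, hrho_counit, hrho_coassoc, hrho_weak, hlam_mul, hlam_one,
      hlam_counit, hlam_coassoc, hlam_weak, hbicomod, hv_rho, hv_lam⟩
  refine ⟨WHAux.actA W S, WHAux.mulA W S, WHAux.oneA W S, WHAux.coactA W S,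
    fun h a => rfl, fun a b => rfl, rfl, WHAux.coact_compat W S,
    WHAux.act_mul_act W S, WHAux.act_one W S,
    fun h a b n h1 h2 hrep => WHAux.act_mulA W S h a b hrep,
    WHAux.act_eps_t W S,
    WHAux.coact_coassoc W S, WHAux.coact_counit W S,
    fun a b N N' a1 a0 b1 b0 h1 h2 => WHAux.coact_mul W S a b a1 a0 b1 b0 h1 h2,
    WHAux.coact_one W S, ?_⟩
  refine ⟨WHAux.mQ W S, WHAux.rhoQ W S, WHAux.lamQ W S, WHAux.phiQ W S,
    fun a a' h h' n h1 h2 hrep => WHAux.mQ_formula W S a a' h h' hrep,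
    WHAux.mQ_assoc W S, WHAux.mQ_one_left W S, WHAux.mQ_one_right W S,
    fun a h n h1 h2 hrep => WHAux.rhoQ_formula W S a h hrep,
    fun a h N n a1 a0 h1 h2 hca hch => WHAux.lamQ_formula W S a h hca hch,
    fun a h => by rw [WHAux.phiQ_mk, WHAux.phi0_tmul],
    WHAux.phiQ_bij W S, WHAux.phiQ_mul W S, WHAux.phiQ_one W S,
    WHAux.rho_phiQ W S, WHAux.lam_phiQ W S⟩
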